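/- arXiv:1404.6392 — 3 statements merged into one kernel-verified Lean document; each statement's English description precedes it below -/
import Mathlib

section
/- Let d = (p, 2, r) and C₃ = [12][13][23] the three-cycle (no three-way interaction model). For sequences i = i₁,…,i_k ∈ [p] and j = j₁,…,j_k ∈ [r] with pairwise distinct entries, define f_{i,j} = Σ_{t=1}^{k}(e_{i_t,1,j_t} − e_{i_t,2,j_t} + e_{i_t,2,j_{t+1}} − e_{i_t,1,j_{t+1}}) with j_{k+1} = j₁. Then the set ℳ of all f_{i,j} for k = 2,…,min(p,r) is the Graver basis of ker_ℤ ℬ_{C₃,d}; in particular ℳ is a Gröbner basis for every additive preorder. -/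
namespace Stmt16

/-- The design matrix of the hierarchical model of the 3-cycle `C₃ = [12][13][23]`
with state space `[p] × [2] × [r]`. -/
def designC3 (p r : ℕ) :
    Matrix ((Fin p × Fin 2) ⊕ (Fin p × Fin r) ⊕ (Fin 2 × Fin r))
      (Fin p × Fin 2 × Fin r) ℤ :=
  Matrix.of fun k x =>
    Sum.elim (fun e => if e = (x.1, x.2.1) then 1 else 0)
      (Sum.elim (fun e => if e = (x.1, x.2.2) then 1 else 0)
        (fun e => if e = (x.2.1, x.2.2) then 1 else 0)) k

/-- The set of moves `f_{i,j}` for sequences `i`, `j` of length `k` (written as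
`k + 2` so that `2 ≤ length`) with pairwise distinct entries,
`f_{i,j} = Σ_t (e_{i_t,1,j_t} − e_{i_t,2,j_t} + e_{i_t,2,j_{t+1}} − e_{i_t,1,j_{t+1}})`
with cyclic indexing `j_{k+1} = j₁`. -/
def movesC3 (p r : ℕ) : Set (Fin p × Fin 2 × Fin r → ℤ) :=
  {f | ∃ k : ℕ, k + 2 ≤ min p r ∧
    ∃ (i : Fin (k + 2) → Fin p) (j : Fin (k + 2) → Fin r),
      Function.Injective i ∧ Function.Injective j ∧
      f = ∑ t : Fin (k + 2),
        (Pi.single (i t, (0 : Fin 2), j t) (1 : ℤ)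
          - Pi.single (i t, (1 : Fin 2), j t) 1
          + Pi.single (i t, (1 : Fin 2), j (t + 1)) 1
          - Pi.single (i t, (0 : Fin 2), j (t + 1)) 1)}

def isAddPreorder {ι : Type*} (R : (ι → ℤ) → (ι → ℤ) → Prop) : Prop :=
  (∀ u, R u u) ∧ (∀ u v w, R u v → R v w → R u w) ∧
  (∀ u v, R u v ∨ R v u) ∧ (∀ u v w, R u v → R (u + w) (v + w))

def dstep {ι : Type*} (F M : Set (ι → ℤ)) (R : (ι → ℤ) → (ι → ℤ) → Prop)
    (u v : ι → ℤ) : Prop :=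
  u ∈ F ∧ v ∈ F ∧ (v - u ∈ M ∨ u - v ∈ M) ∧ R u v

def mutReach {ι : Type*} (F M : Set (ι → ℤ)) (R : (ι → ℤ) → (ι → ℤ) → Prop)
    (u v : ι → ℤ) : Prop :=
  Relation.ReflTransGen (dstep F M R) u v ∧ Relation.ReflTransGen (dstep F M R) v u

def isSink {ι : Type*} (F M : Set (ι → ℤ)) (R : (ι → ℤ) → (ι → ℤ) → Prop)
    (u : ι → ℤ) : Prop :=
  u ∈ F ∧ ∀ v, Relation.ReflTransGen (dstep F M R) u v →
    Relation.ReflTransGen (dstep F M R) v u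

def weakConn {ι : Type*} (F M : Set (ι → ℤ)) (R : (ι → ℤ) → (ι → ℤ) → Prop) : Prop :=
  ∀ u ∈ F, ∀ v ∈ F,
    Relation.ReflTransGen (fun a b => dstep F M R a b ∨ dstep F M R b a) u v

def isGroebner {ι : Type*} (Fam : Set (Set (ι → ℤ))) (M : Set (ι → ℤ))
    (R : (ι → ℤ) → (ι → ℤ) → Prop) : Prop :=
  ∀ F ∈ Fam, weakConn F M R ∧
    (∀ u v, isSink F M R u → isSink F M R v → mutReach F M R u v) ∧
    (∀ u, isSink F M R u → ∀ v ∈ F, R v u)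

/-- The family of lattice fibers of a lattice given as a set. -/
def latFam {ι : Type*} (Lat : Set (ι → ℤ)) : Set (Set (ι → ℤ)) :=
  {F | ∃ u : ι → ℤ, F = {w | 0 ≤ w ∧ w - u ∈ Lat}}

/-- The Graver basis (primitive elements) of a lattice given as a set. -/
def graver {ι : Type*} (Lat : Set (ι → ℤ)) : Set (ι → ℤ) :=
  {v | v ∈ Lat ∧ v ≠ 0 ∧ ∀ v₁ v₂ : ι → ℤ, v₁ ∈ Lat → v₂ ∈ Lat → v = v₁ + v₂ →
    (∀ i, 0 ≤ v₁ i * v₂ i) → v₁ = 0 ∨ v₂ = 0}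

/-! ### abstract development -/

variable {ι : Type*}

def between (m w : ι → ℤ) : Prop :=
  ∀ c, (0 ≤ m c ∧ m c ≤ w c) ∨ (w c ≤ m c ∧ m c ≤ 0)

lemma list_sum_apply (l : List (ι → ℤ)) (c : ι) :
    l.sum c = (l.map (fun f => f c)).sum := by
  induction l with
  | nil => rfl
  | cons a t ih => simp [List.sum_cons, ih]


lemma sum_apply_nonneg (c : ι) : ∀ T : List (ι → ℤ), (∀ f ∈ T, 0 ≤ f c) → 0 ≤ T.sum c := by
  intro T
  induction T with
  | nil => intro _; simp
  | cons a t ih =>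
    intro h
    have h1 := h a (List.mem_cons_self)
    have h2 := ih (fun f hf => h f (List.mem_cons_of_mem _ hf))
    have : (a :: t).sum c = a c + t.sum c := by simp [List.sum_cons]
    omega

lemma sum_apply_nonpos (c : ι) : ∀ T : List (ι → ℤ), (∀ f ∈ T, f c ≤ 0) → T.sum c ≤ 0 := by
  intro T
  induction T with
  | nil => intro _; simp
  | cons a t ih =>
    intro h
    have h1 := h a (List.mem_cons_self)
    have h2 := ih (fun f hf => h f (List.mem_cons_of_mem _ hf))
    have : (a :: t).sum c = a c + t.sum c := by simp [List.sum_cons]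
    omega

lemma single_le_sum_apply (c : ι) : ∀ T : List (ι → ℤ), (∀ f ∈ T, 0 ≤ f c) →
    ∀ f ∈ T, f c ≤ T.sum c := by
  intro T
  induction T with
  | nil => simp
  | cons a t ih =>
    intro h f hf
    have hcons : (a :: t).sum c = a c + t.sum c := by simp [List.sum_cons]
    rcases List.mem_cons.1 hf with rfl | hf
    · have := sum_apply_nonneg c t (fun g hg => h g (List.mem_cons_of_mem _ hg))
      omega
    · have h1 := ih (fun g hg => h g (List.mem_cons_of_mem _ hg)) f hf
      have h2 := h a (List.mem_cons_self)
      omega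

lemma sum_le_single_apply (c : ι) : ∀ T : List (ι → ℤ), (∀ f ∈ T, f c ≤ 0) →
    ∀ f ∈ T, T.sum c ≤ f c := by
  intro T
  induction T with
  | nil => simp
  | cons a t ih =>
    intro h f hf
    have hcons : (a :: t).sum c = a c + t.sum c := by simp [List.sum_cons]
    rcases List.mem_cons.1 hf with rfl | hf
    · have := sum_apply_nonpos c t (fun g hg => h g (List.mem_cons_of_mem _ hg))
      omega
    · have h1 := ih (fun g hg => h g (List.mem_cons_of_mem _ hg)) f hf
      have h2 := h a (List.mem_cons_self)
      omega

lemma betweens_tail {g v : ι → ℤ} {T : List (ι → ℤ)}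
    (hb : ∀ f ∈ (g :: T), between f v) (hv : v = (g :: T).sum) :
    (v - g = T.sum) ∧ ∀ h ∈ T, between h (v - g) := by
  have hsum : ∀ c, v c = g c + T.sum c := by
    intro c; rw [hv]; simp [List.sum_cons]
  have hvg : ∀ c, (v - g) c = T.sum c := by
    intro c; simp [Pi.sub_apply, hsum c]
  constructor
  · funext c; exact hvg c
  · intro h hh c
    have hbh := hb h (List.mem_cons_of_mem _ hh) c
    rcases le_or_gt 0 (v c) with hvc | hvc
    · have hall : ∀ f ∈ T, 0 ≤ f c := by
        intro f hf
        have := hb f (List.mem_cons_of_mem _ hf) c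
        omega
      have hle := single_le_sum_apply c T hall h hh
      have := hvg c
      left; omega
    · have hall : ∀ f ∈ T, f c ≤ 0 := by
        intro f hf
        have := hb f (List.mem_cons_of_mem _ hf) c
        omega
      have hle := sum_le_single_apply c T hall h hh
      have := hvg c
      right; omega

theorem abstract_graver (Lat M : Set (ι → ℤ))
    (hsub : ∀ a ∈ Lat, ∀ b ∈ Lat, a - b ∈ Lat)
    (hMLat : M ⊆ Lat) (hMne : ∀ m ∈ M, m ≠ (0 : ι → ℤ))
    (hdec : ∀ v ∈ Lat, ∃ G : List (ι → ℤ),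
      (∀ g ∈ G, g ∈ M ∧ between g v) ∧ v = G.sum)
    (hprim : ∀ m ∈ M, ∀ v₁ v₂ : ι → ℤ, v₁ ∈ Lat → v₂ ∈ Lat → m = v₁ + v₂ →
      (∀ i, 0 ≤ v₁ i * v₂ i) → v₁ = 0 ∨ v₂ = 0) :
    M = graver Lat := by
  ext m
  constructor
  · intro hm
    exact ⟨hMLat hm, hMne m hm, hprim m hm⟩
  · rintro ⟨hvL, hv0, hvP⟩
    obtain ⟨G, hG, hGsum⟩ := hdec m hvL
    cases G with
    | nil => exact absurd (by simpa using hGsum) hv0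
    | cons g T =>
      have hgM : g ∈ M := (hG g (List.mem_cons_self)).1
      have hgB : between g m := (hG g (List.mem_cons_self)).2
      have hgL : g ∈ Lat := hMLat hgM
      have hrest : m - g ∈ Lat := hsub m hvL g hgL
      have hdecomp : m = g + (m - g) := by abel
      have hpr : ∀ c, 0 ≤ g c * (m - g) c := by
        intro c
        rcases hgB c with ⟨h1, h2⟩ | ⟨h1, h2⟩
        · have : 0 ≤ (m - g) c := by simp [Pi.sub_apply]; omega
          exact mul_nonneg h1 this
        · have h3 : (m - g) c ≤ 0 := by simp [Pi.sub_apply]; omega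
          have h4 := mul_nonneg (a := -g c) (b := -((m - g) c))
            (by simp [Pi.sub_apply]; omega) (by simp [Pi.sub_apply]; omega)
          rw [neg_mul_neg] at h4
          exact h4
      rcases hvP g (m - g) hgL hrest hdecomp hpr with h | h
      · exact absurd h (hMne g hgM)
      · have : m = g := by
          have := sub_eq_zero.mp h; exact this
        rwa [this]



theorem abstract_groebner (Lat M : Set (ι → ℤ))
    (h0 : (0 : ι → ℤ) ∈ Lat)
    (hsub : ∀ a ∈ Lat, ∀ b ∈ Lat, a - b ∈ Lat)
    (hMLat : M ⊆ Lat)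
    (hdec : ∀ v ∈ Lat, ∃ G : List (ι → ℤ),
      (∀ g ∈ G, g ∈ M ∧ between g v) ∧ v = G.sum)
    (R : (ι → ℤ) → (ι → ℤ) → Prop) (hR : isAddPreorder R) :
    isGroebner (latFam Lat) M R := by
  obtain ⟨hrefl, htrans, htot, hadd⟩ := hR
  rintro F ⟨u₀, rfl⟩
  set F : Set (ι → ℤ) := {w | 0 ≤ w ∧ w - u₀ ∈ Lat} with hFdef
  have hmem : ∀ u : ι → ℤ, u ∈ F ↔ (∀ c, 0 ≤ u c) ∧ u - u₀ ∈ Lat := by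
    intro u
    constructor
    · intro hu; exact ⟨fun c => hu.1 c, hu.2⟩
    · intro hu; exact ⟨fun c => hu.1 c, hu.2⟩
  have hadd' : ∀ a ∈ Lat, ∀ b ∈ Lat, a + b ∈ Lat := by
    intro a ha b hb
    have h1 : (0 : ι → ℤ) - b ∈ Lat := hsub 0 h0 b hb
    have h2 := hsub a ha _ h1
    have he : a - (0 - b) = a + b := by abel
    rwa [he] at h2
  have hdiff : ∀ u ∈ F, ∀ v ∈ F, v - u ∈ Lat := by
    intro u hu v hv
    have h1 := hsub (v - u₀) ((hmem v).1 hv).2 (u - u₀) ((hmem u).1 hu).2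
    have he : (v - u₀) - (u - u₀) = v - u := by abel
    rwa [he] at h1
  have hstepP : ∀ u v g : ι → ℤ, u ∈ F → v ∈ F → g ∈ M → between g (v - u) →
      u + g ∈ F := by
    intro u v g hu hv hg hb
    refine (hmem _).2 ⟨?_, ?_⟩
    · intro c
      have hbc := hb c
      simp only [Pi.sub_apply] at hbc
      have h1 := ((hmem u).1 hu).1 c
      have h2 := ((hmem v).1 hv).1 c
      have : (u + g) c = u c + g c := rfl
      omega
    · have he : (u + g) - u₀ = (u - u₀) + g := by abel
      rw [he]
      exact hadd' _ ((hmem u).1 hu).2 _ (hMLat hg)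
  have hstepM : ∀ u v g : ι → ℤ, u ∈ F → v ∈ F → g ∈ M → between g (v - u) →
      v - g ∈ F := by
    intro u v g hu hv hg hb
    refine (hmem _).2 ⟨?_, ?_⟩
    · intro c
      have hbc := hb c
      simp only [Pi.sub_apply] at hbc
      have h1 := ((hmem u).1 hu).1 c
      have h2 := ((hmem v).1 hv).1 c
      have : (v - g) c = v c - g c := rfl
      omega
    · have he : (v - g) - u₀ = (v - u₀) - g := by abel
      rw [he]
      exact hsub _ ((hmem v).1 hv).2 _ (hMLat hg)
  have hRreach : ∀ a b : ι → ℤ, Relation.ReflTransGen (dstep F M R) a b → R a b := by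
    intro a b h
    induction h with
    | refl => exact hrefl a
    | tail _ hbc ih => exact htrans _ _ _ ih hbc.2.2.2
  have hsinkR : ∀ u u' : ι → ℤ, isSink F M R u →
      Relation.ReflTransGen (dstep F M R) u u' → isSink F M R u' := by
    intro u u' hu hreach
    constructor
    · rcases Relation.ReflTransGen.cases_tail hreach with h | ⟨c, _, hc⟩
      · rw [h]; exact hu.1
      · exact hc.2.1
    · intro w hw
      exact (hu.2 w (hreach.trans hw)).trans hreach
  -- tail data
  have htail : ∀ (g : ι → ℤ) (T : List (ι → ℤ)) (u v : ι → ℤ),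
      v - u = (g :: T).sum → (∀ f ∈ (g :: T), f ∈ M ∧ between f (v - u)) →
      (v - (u + g) = T.sum ∧ ((v - g) - u = T.sum) ∧
        (∀ f ∈ T, f ∈ M ∧ between f (v - (u + g))) ∧
        (∀ f ∈ T, f ∈ M ∧ between f ((v - g) - u))) := by
    intro g T u v hs hG
    obtain ⟨h1, h2⟩ := betweens_tail (fun f hf => (hG f hf).2) hs
    have e1 : v - (u + g) = v - u - g := by abel
    have e2 : (v - g) - u = v - u - g := by abel
    refine ⟨by rw [e1, h1], by rw [e2, h1], ?_, ?_⟩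
    · intro f hf
      exact ⟨(hG f (List.mem_cons_of_mem _ hf)).1, by rw [e1]; exact h2 f hf⟩
    · intro f hf
      exact ⟨(hG f (List.mem_cons_of_mem _ hf)).1, by rw [e2]; exact h2 f hf⟩
  have hgsub1 : ∀ u g : ι → ℤ, (u + g) - u = g := by intro u g; abel
  have hgsub2 : ∀ v g : ι → ℤ, v - (v - g) = g := by intro v g; abel
  -- weak connectivity
  have hconn : ∀ (G : List (ι → ℤ)) (u v : ι → ℤ), u ∈ F → v ∈ F →
      v - u = G.sum → (∀ g ∈ G, g ∈ M ∧ between g (v - u)) →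
      Relation.ReflTransGen (fun a b => dstep F M R a b ∨ dstep F M R b a) u v := by
    intro G
    induction G with
    | nil =>
      intro u v _ _ hs _
      have : v = u := sub_eq_zero.1 (by simpa using hs)
      rw [this]
    | cons g T ih =>
      intro u v hu hv hs hG
      have hgM := (hG g (List.mem_cons_self)).1
      have hgB := (hG g (List.mem_cons_self)).2
      have hu' : u + g ∈ F := hstepP u v g hu hv hgM hgB
      obtain ⟨hs', _, hB', _⟩ := htail g T u v hs hG
      have hrest := ih (u + g) v hu' hv hs' hB'
      rcases htot u (u + g) with hRug | hRgu
      · exact Relation.ReflTransGen.head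
          (Or.inl ⟨hu, hu', Or.inl (by rw [hgsub1]; exact hgM), hRug⟩) hrest
      · exact Relation.ReflTransGen.head
          (Or.inr ⟨hu', hu, Or.inr (by rw [hgsub1]; exact hgM), hRgu⟩) hrest
  -- sinks are maximal
  have hmax : ∀ (G : List (ι → ℤ)) (u v : ι → ℤ), isSink F M R u → v ∈ F →
      v - u = G.sum → (∀ g ∈ G, g ∈ M ∧ between g (v - u)) → R v u := by
    intro G
    induction G with
    | nil =>
      intro u v _ _ hs _
      have : v = u := sub_eq_zero.1 (by simpa using hs)
      rw [this]; exact hrefl u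
    | cons g T ih =>
      intro u v hu hv hs hG
      have huF := hu.1
      have hgM := (hG g (List.mem_cons_self)).1
      have hgB := (hG g (List.mem_cons_self)).2
      obtain ⟨hs1, hs2, hB1, hB2⟩ := htail g T u v hs hG
      rcases htot u (u + g) with hRug | hRgu
      · have hu'F : u + g ∈ F := hstepP u v g huF hv hgM hgB
        have hstep : dstep F M R u (u + g) :=
          ⟨huF, hu'F, Or.inl (by rw [hgsub1]; exact hgM), hRug⟩
        have hreach := Relation.ReflTransGen.single hstep
        have hsink' := hsinkR u (u + g) hu hreach
        have hback : R (u + g) u := hRreach _ _ (hu.2 _ hreach)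
        exact htrans _ _ _ (ih (u + g) v hsink' hv hs1 hB1) hback
      · have hv'F : v - g ∈ F := hstepM u v g huF hv hgM hgB
        have h3 := ih u (v - g) hu hv'F hs2 hB2
        have h4 := hadd (u + g) u ((v - g) - u) hRgu
        have e1 : (u + g) + ((v - g) - u) = v := by abel
        have e2 : u + ((v - g) - u) = v - g := by abel
        rw [e1, e2] at h4
        exact htrans _ _ _ h4 h3
  -- sinks mutually reachable
  have hmut : ∀ (G : List (ι → ℤ)) (u v : ι → ℤ), isSink F M R u → isSink F M R v →
      v - u = G.sum → (∀ g ∈ G, g ∈ M ∧ between g (v - u)) → mutReach F M R u v := by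
    intro G
    induction G with
    | nil =>
      intro u v _ _ hs _
      have : v = u := sub_eq_zero.1 (by simpa using hs)
      rw [this]
      exact ⟨Relation.ReflTransGen.refl, Relation.ReflTransGen.refl⟩
    | cons g T ih =>
      intro u v hu hv hs hG
      have huF := hu.1
      have hvF := hv.1
      have hgM := (hG g (List.mem_cons_self)).1
      have hgB := (hG g (List.mem_cons_self)).2
      obtain ⟨hs1, hs2, hB1, hB2⟩ := htail g T u v hs hG
      rcases htot u (u + g) with hRug | hRgu
      · have hu'F : u + g ∈ F := hstepP u v g huF hvF hgM hgB
        have hstep : dstep F M R u (u + g) :=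
          ⟨huF, hu'F, Or.inl (by rw [hgsub1]; exact hgM), hRug⟩
        have hreach := Relation.ReflTransGen.single hstep
        have hsink' := hsinkR u (u + g) hu hreach
        obtain ⟨p1, p2⟩ := ih (u + g) v hsink' hv hs1 hB1
        exact ⟨Relation.ReflTransGen.head hstep p1, p2.trans (hu.2 _ hreach)⟩
      · have hv'F : v - g ∈ F := hstepM u v g huF hvF hgM hgB
        have h4 := hadd (u + g) u ((v - g) - u) hRgu
        have e1 : (u + g) + ((v - g) - u) = v := by abel
        have e2 : u + ((v - g) - u) = v - g := by abel
        rw [e1, e2] at h4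
        have hstepv : dstep F M R v (v - g) :=
          ⟨hvF, hv'F, Or.inr (by rw [hgsub2]; exact hgM), h4⟩
        have hreachv := Relation.ReflTransGen.single hstepv
        have hsinkv' := hsinkR v (v - g) hv hreachv
        obtain ⟨q1, q2⟩ := ih u (v - g) hu hsinkv' hs2 hB2
        exact ⟨q1.trans (hv.2 _ hreachv), Relation.ReflTransGen.head hstepv q2⟩
  refine ⟨?_, ?_, ?_⟩
  · intro u hu v hv
    obtain ⟨G, hG, hGs⟩ := hdec (v - u) (hdiff u hu v hv)
    exact hconn G u v hu hv hGs hG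
  · intro u v hu hv
    obtain ⟨G, hG, hGs⟩ := hdec (v - u) (hdiff u hu.1 v hv.1)
    exact hmut G u v hu hv hGs hG
  · intro u hu v hv
    obtain ⟨G, hG, hGs⟩ := hdec (v - u) (hdiff u hu.1 v hv)
    exact hmax G u v hu hv hGs hG


variable {p r : ℕ}

/-- two-way lattice: zero row and column sums -/
def rc (p r : ℕ) : Set (Fin p × Fin r → ℤ) :=
  {w | (∀ i, ∑ j, w (i, j) = 0) ∧ (∀ j, ∑ i, w (i, j) = 0)}

/-- cycle move -/
def cyc {p r k : ℕ} (I : Fin (k + 2) → Fin p) (J : Fin (k + 2) → Fin r) :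
    Fin p × Fin r → ℤ :=
  ∑ t, (Pi.single (I t, J t) (1 : ℤ) - Pi.single (I t, J (t + 1)) 1)

def moves2 (p r : ℕ) : Set (Fin p × Fin r → ℤ) :=
  {f | ∃ k : ℕ, k + 2 ≤ min p r ∧
    ∃ (I : Fin (k + 2) → Fin p) (J : Fin (k + 2) → Fin r),
      Function.Injective I ∧ Function.Injective J ∧ f = cyc I J}

lemma fin_succ_ne {k : ℕ} (t : Fin (k + 2)) : t + 1 ≠ t := by
  intro h
  have h1 : t + 1 = t + 0 := by rw [h, add_zero]
  have := add_left_cancel h1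
  simp at this

lemma fin_pred_ne {k : ℕ} (t : Fin (k + 2)) : t - 1 ≠ t := by
  intro h
  have : t - 1 + 1 = t + 1 := by rw [h]
  rw [sub_add_cancel] at this
  exact fin_succ_ne t this.symm

lemma cyc_apply {k : ℕ} (I : Fin (k + 2) → Fin p) (J : Fin (k + 2) → Fin r)
    (c : Fin p × Fin r) :
    cyc I J c = ∑ t, ((if c = (I t, J t) then (1 : ℤ) else 0)
      - (if c = (I t, J (t + 1)) then 1 else 0)) := by
  simp [cyc, Finset.sum_apply, Pi.sub_apply, Pi.single_apply]

lemma cyc_apply_pos {k : ℕ} {I : Fin (k + 2) → Fin p} {J : Fin (k + 2) → Fin r}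
    (hI : Function.Injective I) (hJ : Function.Injective J) (s : Fin (k + 2)) :
    cyc I J (I s, J s) = 1 := by
  rw [cyc_apply]
  rw [Finset.sum_eq_single_of_mem s (Finset.mem_univ s)]
  · rw [if_pos rfl, if_neg, sub_zero]
    intro h
    simp only [Prod.mk.injEq] at h
    exact fin_succ_ne s (hJ h.2.symm)
  · intro t _ hts
    rw [if_neg, if_neg, sub_zero]
    · intro h
      simp only [Prod.mk.injEq] at h
      exact hts (hI h.1.symm)
    · intro h
      simp only [Prod.mk.injEq] at h
      exact hts (hI h.1.symm)

lemma cyc_apply_neg {k : ℕ} {I : Fin (k + 2) → Fin p} {J : Fin (k + 2) → Fin r}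
    (hI : Function.Injective I) (hJ : Function.Injective J) (s : Fin (k + 2)) :
    cyc I J (I s, J (s + 1)) = -1 := by
  rw [cyc_apply]
  rw [Finset.sum_eq_single_of_mem s (Finset.mem_univ s)]
  · rw [if_neg, if_pos rfl, zero_sub]
    intro h
    simp only [Prod.mk.injEq] at h
    exact fin_succ_ne s (hJ h.2)
  · intro t _ hts
    rw [if_neg, if_neg, sub_zero]
    · intro h
      simp only [Prod.mk.injEq] at h
      exact hts (hI h.1.symm)
    · intro h
      simp only [Prod.mk.injEq] at h
      exact hts (hI h.1.symm)

lemma cyc_apply_zero {k : ℕ} (I : Fin (k + 2) → Fin p) (J : Fin (k + 2) → Fin r)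
    (c : Fin p × Fin r) (hpos : ∀ t, c ≠ (I t, J t)) (hneg : ∀ t, c ≠ (I t, J (t + 1))) :
    cyc I J c = 0 := by
  rw [cyc_apply]
  apply Finset.sum_eq_zero
  intro t _
  rw [if_neg (hpos t), if_neg (hneg t), sub_zero]

lemma cyc_cases {k : ℕ} {I : Fin (k + 2) → Fin p} {J : Fin (k + 2) → Fin r}
    (hI : Function.Injective I) (hJ : Function.Injective J) (c : Fin p × Fin r) :
    (∃ t, c = (I t, J t) ∧ cyc I J c = 1) ∨
    (∃ t, c = (I t, J (t + 1)) ∧ cyc I J c = -1) ∨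
    cyc I J c = 0 := by
  by_cases hp : ∃ t, c = (I t, J t)
  · obtain ⟨t, rfl⟩ := hp
    exact Or.inl ⟨t, rfl, cyc_apply_pos hI hJ t⟩
  · by_cases hn : ∃ t, c = (I t, J (t + 1))
    · obtain ⟨t, rfl⟩ := hn
      exact Or.inr (Or.inl ⟨t, rfl, cyc_apply_neg hI hJ t⟩)
    · push_neg at hp hn
      exact Or.inr (Or.inr (cyc_apply_zero I J c hp hn))

lemma cyc_mem_rc {k : ℕ} (I : Fin (k + 2) → Fin p) (J : Fin (k + 2) → Fin r) :
    cyc I J ∈ rc p r := by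
  constructor
  · intro i
    have : ∀ j : Fin r, cyc I J (i, j) = ∑ t, ((if (i, j) = (I t, J t) then (1:ℤ) else 0)
        - (if (i, j) = (I t, J (t + 1)) then 1 else 0)) := fun j => cyc_apply I J (i, j)
    simp only [this]
    rw [Finset.sum_comm]
    apply Finset.sum_eq_zero
    intro t _
    rw [Finset.sum_sub_distrib]
    have h1 : (∑ j : Fin r, if (i, j) = (I t, J t) then (1:ℤ) else 0)
        = (if i = I t then 1 else 0) := by
      simp [Prod.mk.injEq, ite_and]
    have h2 : (∑ j : Fin r, if (i, j) = (I t, J (t + 1)) then (1:ℤ) else 0)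
        = (if i = I t then 1 else 0) := by
      simp [Prod.mk.injEq, ite_and]
    rw [h1, h2, sub_self]
  · intro j
    have hc : ∀ i : Fin p, cyc I J (i, j) = ∑ t, ((if (i, j) = (I t, J t) then (1:ℤ) else 0)
        - (if (i, j) = (I t, J (t + 1)) then 1 else 0)) := fun i => cyc_apply I J (i, j)
    simp only [hc]
    rw [Finset.sum_comm]
    have h1 : ∀ t : Fin (k + 2),
        (∑ i : Fin p, if (i, j) = (I t, J t) then (1:ℤ) else 0) = (if j = J t then 1 else 0) := by
      intro t; simp [Prod.mk.injEq, ite_and]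
    have h2 : ∀ t : Fin (k + 2),
        (∑ i : Fin p, if (i, j) = (I t, J (t + 1)) then (1:ℤ) else 0)
          = (if j = J (t + 1) then 1 else 0) := by
      intro t; simp [Prod.mk.injEq, ite_and]
    have h3 : ∀ t : Fin (k + 2), (∑ i : Fin p, ((if (i, j) = (I t, J t) then (1:ℤ) else 0)
        - (if (i, j) = (I t, J (t + 1)) then 1 else 0)))
          = (if j = J t then 1 else 0) - (if j = J (t + 1) then 1 else 0) := by
      intro t; rw [Finset.sum_sub_distrib, h1, h2]
    rw [Finset.sum_congr rfl (fun t _ => h3 t), Finset.sum_sub_distrib]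
    have h4 : (∑ t : Fin (k + 2), if j = J (t + 1) then (1:ℤ) else 0)
        = ∑ t : Fin (k + 2), if j = J t then (1:ℤ) else 0 := by
      exact Fintype.sum_equiv (Equiv.addRight 1) _ _ (fun t => rfl)
    rw [h4, sub_self]

lemma rc_zero : (0 : Fin p × Fin r → ℤ) ∈ rc p r := by
  constructor <;> intro _ <;> simp

lemma rc_sub {a b : Fin p × Fin r → ℤ} (ha : a ∈ rc p r) (hb : b ∈ rc p r) :
    a - b ∈ rc p r := by
  constructor
  · intro i
    simp only [Pi.sub_apply, Finset.sum_sub_distrib, ha.1 i, hb.1 i, sub_zero]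
  · intro j
    simp only [Pi.sub_apply, Finset.sum_sub_distrib, ha.2 j, hb.2 j, sub_zero]

lemma rc_add {a b : Fin p × Fin r → ℤ} (ha : a ∈ rc p r) (hb : b ∈ rc p r) :
    a + b ∈ rc p r := by
  constructor
  · intro i
    simp only [Pi.add_apply, Finset.sum_add_distrib, ha.1 i, hb.1 i, add_zero]
  · intro j
    simp only [Pi.add_apply, Finset.sum_add_distrib, ha.2 j, hb.2 j, add_zero]

lemma moves2_mem_rc {m : Fin p × Fin r → ℤ} (hm : m ∈ moves2 p r) : m ∈ rc p r := by
  obtain ⟨k, _, I, J, _, _, rfl⟩ := hm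
  exact cyc_mem_rc I J

lemma moves2_ne_zero {m : Fin p × Fin r → ℤ} (hm : m ∈ moves2 p r) : m ≠ 0 := by
  obtain ⟨k, _, I, J, hI, hJ, rfl⟩ := hm
  intro h
  have := cyc_apply_pos hI hJ (0 : Fin (k + 2))
  rw [h] at this
  simp at this

/-- pointwise decomposition dichotomy -/
lemma int_dich {a b e : ℤ} (h : a + b = e) (hp : 0 ≤ a * b)
    (he : e = 1 ∨ e = -1 ∨ e = 0) : (a = 0 ∧ b = e) ∨ (a = e ∧ b = 0) := by
  rcases lt_trichotomy a 0 with ha | ha | ha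
  · rcases lt_trichotomy b 0 with hb | hb | hb
    · exfalso; omega
    · right; omega
    · exfalso; nlinarith
  · left; omega
  · rcases lt_trichotomy b 0 with hb | hb | hb
    · exfalso; nlinarith
    · right; omega
    · exfalso; omega

open Fin.NatCast in
lemma cyc_primitive {k : ℕ} {I : Fin (k + 2) → Fin p} {J : Fin (k + 2) → Fin r}
    (hI : Function.Injective I) (hJ : Function.Injective J)
    (w₁ w₂ : Fin p × Fin r → ℤ) (h1 : w₁ ∈ rc p r) (h2 : w₂ ∈ rc p r)
    (hsum : cyc I J = w₁ + w₂) (hpr : ∀ c, 0 ≤ w₁ c * w₂ c) :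
    w₁ = 0 ∨ w₂ = 0 := by
  set m := cyc I J with hm
  -- pointwise dichotomy
  have hdich : ∀ c, (w₁ c = 0 ∧ w₂ c = m c) ∨ (w₁ c = m c ∧ w₂ c = 0) := by
    intro c
    have hval : m c = 1 ∨ m c = -1 ∨ m c = 0 := by
      rcases cyc_cases hI hJ c with ⟨t, _, h⟩ | ⟨t, _, h⟩ | h
      · exact Or.inl h
      · exact Or.inr (Or.inl h)
      · exact Or.inr (Or.inr h)
    have hadd : w₁ c + w₂ c = m c := by
      rw [hsum]; rfl
    exact int_dich hadd (hpr c) hval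
  have hzero : ∀ c, m c = 0 → w₁ c = 0 ∧ w₂ c = 0 := by
    intro c hc
    rcases hdich c with ⟨ha, hb⟩ | ⟨ha, hb⟩ <;> omega
  -- w₁ vanishes off the cycle cells
  have hoff : ∀ c : Fin p × Fin r, (∀ t, c ≠ (I t, J t)) → (∀ t, c ≠ (I t, J (t + 1))) →
      w₁ c = 0 ∧ w₂ c = 0 :=
    fun c hp hn => hzero c (cyc_apply_zero I J c hp hn)
  -- row equations
  have hrow : ∀ t, w₁ (I t, J t) + w₁ (I t, J (t + 1)) = 0 := by
    intro t
    have hJne : J t ≠ J (t + 1) := fun h => fin_succ_ne t (hJ h.symm)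
    have hsub : ({J t, J (t + 1)} : Finset (Fin r)) ⊆ Finset.univ := Finset.subset_univ _
    have hvan : ∀ j ∈ Finset.univ, j ∉ ({J t, J (t + 1)} : Finset (Fin r)) →
        w₁ (I t, j) = 0 := by
      intro j _ hj
      simp only [Finset.mem_insert, Finset.mem_singleton] at hj
      push_neg at hj
      refine (hoff (I t, j) ?_ ?_).1
      · intro s h
        simp only [Prod.mk.injEq] at h
        rw [hI h.1] at hj
        exact hj.1 h.2
      · intro s h
        simp only [Prod.mk.injEq] at h
        rw [hI h.1] at hj
        exact hj.2 h.2
    have := Finset.sum_subset hsub hvan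
    rw [h1.1 (I t)] at this
    rw [← this, Finset.sum_pair hJne]
  -- column equations
  have hcol : ∀ t, w₁ (I t, J t) + w₁ (I (t - 1), J t) = 0 := by
    intro t
    have hIne : I t ≠ I (t - 1) := fun h => fin_pred_ne t (hI h.symm)
    have hsub : ({I t, I (t - 1)} : Finset (Fin p)) ⊆ Finset.univ := Finset.subset_univ _
    have hvan : ∀ i ∈ Finset.univ, i ∉ ({I t, I (t - 1)} : Finset (Fin p)) →
        w₁ (i, J t) = 0 := by
      intro i _ hi
      simp only [Finset.mem_insert, Finset.mem_singleton] at hi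
      push_neg at hi
      refine (hoff (i, J t) ?_ ?_).1
      · intro s h
        simp only [Prod.mk.injEq] at h
        rw [hJ h.2] at hi
        exact hi.1 h.1
      · intro s h
        simp only [Prod.mk.injEq] at h
        have hs : s = t - 1 := by
          have : s + 1 = t := (hJ h.2).symm
          rw [← this]; rw [add_sub_cancel_right]
        rw [hs] at h
        exact hi.2 h.1
    have := Finset.sum_subset hsub hvan
    rw [h1.2 (J t)] at this
    rw [← this, Finset.sum_pair hIne]
  -- Q is constant
  set Q : Fin (k + 2) → ℤ := fun t => w₁ (I t, J t) with hQ
  have hQstep : ∀ t, Q (t + 1) = Q t := by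
    intro t
    have e1 := hrow t
    have e2 := hcol (t + 1)
    have e3 : (t + 1 : Fin (k + 2)) - 1 = t := by rw [add_sub_cancel_right]
    rw [e3] at e2
    simp only [hQ]
    omega
  have hQconst : ∀ t, Q t = Q 0 := by
    have hnat : ∀ n : ℕ, Q (n : Fin (k + 2)) = Q 0 := by
      intro n
      induction n with
      | zero => norm_num
      | succ n ih =>
        have : ((n + 1 : ℕ) : Fin (k + 2)) = (n : Fin (k + 2)) + 1 := by
          push_cast; ring
        rw [this, hQstep, ih]
    intro t
    have : ((t.val : ℕ) : Fin (k + 2)) = t := Fin.cast_val_eq_self t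
    rw [← this, hnat]
  by_cases hQ0 : Q 0 = 0
  · left
    funext c
    rcases cyc_cases hI hJ c with ⟨t, rfl, _⟩ | ⟨t, rfl, _⟩ | h
    · show Q t = 0
      rw [hQconst t, hQ0]
    · have := hrow t
      have hq : Q t = 0 := by rw [hQconst t, hQ0]
      simp only [hQ] at hq
      show w₁ (I t, J (t + 1)) = 0
      omega
    · exact (hzero c h).1
  · right
    funext c
    rcases cyc_cases hI hJ c with ⟨t, rfl, _⟩ | ⟨t, rfl, _⟩ | h
    · have hq : Q t ≠ 0 := by rw [hQconst t]; exact hQ0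
      rcases hdich (I t, J t) with ⟨ha, hb⟩ | ⟨ha, hb⟩
      · exact absurd ha hq
      · exact hb
    · have hq : Q t ≠ 0 := by rw [hQconst t]; exact hQ0
      have hr := hrow t
      have hw1 : w₁ (I t, J (t + 1)) ≠ 0 := by
        simp only [hQ] at hq; omega
      rcases hdich (I t, J (t + 1)) with ⟨ha, hb⟩ | ⟨ha, hb⟩
      · exact absurd ha hw1
      · exact hb
    · exact (hzero c h).2

lemma exists_pos_entry {w : Fin p × Fin r → ℤ} (hw : w ∈ rc p r) (hne : w ≠ 0) :
    ∃ c, 0 < w c := by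
  obtain ⟨c, hc0⟩ := Function.ne_iff.1 hne
  have hc : w c ≠ 0 := hc0
  rcases lt_or_gt_of_ne hc with h | h
  · by_contra hall
    push_neg at hall
    have hz := (Finset.sum_eq_zero_iff_of_nonpos (fun j _ => hall (c.1, j))).1 (hw.1 c.1)
    have h2 := hz c.2 (Finset.mem_univ _)
    have h3 : w (c.1, c.2) = w c := rfl
    omega
  · exact ⟨c, h⟩

lemma row_neg {w : Fin p × Fin r → ℤ} (hw : w ∈ rc p r) {x : Fin p} {y : Fin r}
    (h : 0 < w (x, y)) : ∃ y', w (x, y') < 0 := by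
  by_contra hall
  push_neg at hall
  have hz := (Finset.sum_eq_zero_iff_of_nonneg (fun j _ => hall j)).1 (hw.1 x)
  have := hz y (Finset.mem_univ _)
  omega

lemma col_pos {w : Fin p × Fin r → ℤ} (hw : w ∈ rc p r) {x : Fin p} {y : Fin r}
    (h : w (x, y) < 0) : ∃ x', 0 < w (x', y) := by
  by_contra hall
  push_neg at hall
  have hz := (Finset.sum_eq_zero_iff_of_nonpos (fun i _ => hall i)).1 (hw.2 y)
  have := hz x (Finset.mem_univ _)
  omega

lemma build_move {w : Fin p × Fin r → ℤ} (ρ : ℕ → Fin p) (σ : ℕ → Fin r)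
    (a b : ℕ) (hab : a + 2 ≤ b)
    (hpos : ∀ n, 0 < w (ρ n, σ n))
    (hneg : ∀ n, w (ρ n, σ (n + 1)) < 0)
    (hclose : 0 < w (ρ a, σ b))
    (hIinj : ∀ s t, a ≤ s → s < t → t < b → ρ s ≠ ρ t)
    (hJinj : ∀ s t, a < s → s < t → t < b → σ s ≠ σ t)
    (hJb : ∀ s, a < s → s < b → σ s ≠ σ b) :
    ∃ m ∈ moves2 p r, between m w := by
  obtain ⟨k, hk⟩ : ∃ k, b - a = k + 2 := ⟨b - a - 2, by omega⟩
  set I : Fin (k + 2) → Fin p := fun s => ρ (a + s.val) with hIdef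
  set J : Fin (k + 2) → Fin r := fun s => if s.val = 0 then σ b else σ (a + s.val) with hJdef
  have hI : Function.Injective I := by
    intro s t h
    by_contra hne
    have hvne : s.val ≠ t.val := fun hv => hne (Fin.ext hv)
    have hs := s.isLt
    have ht := t.isLt
    rcases Nat.lt_or_ge s.val t.val with hlt | hge
    · exact hIinj (a + s.val) (a + t.val) (by omega) (by omega) (by omega) h
    · exact hIinj (a + t.val) (a + s.val) (by omega) (by omega) (by omega) h.symm
  have hJ : Function.Injective J := by
    intro s t h
    by_contra hne
    have hvne : s.val ≠ t.val := fun hv => hne (Fin.ext hv)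
    have hs := s.isLt
    have ht := t.isLt
    simp only [hJdef] at h
    by_cases hs0 : s.val = 0
    · rw [if_pos hs0, if_neg (by omega : ¬ t.val = 0)] at h
      exact hJb (a + t.val) (by omega) (by omega) h.symm
    · by_cases ht0 : t.val = 0
      · rw [if_neg hs0, if_pos ht0] at h
        exact hJb (a + s.val) (by omega) (by omega) h
      · rw [if_neg hs0, if_neg ht0] at h
        rcases Nat.lt_or_ge s.val t.val with hlt | hge
        · exact hJinj (a + s.val) (a + t.val) (by omega) (by omega) (by omega) h
        · exact hJinj (a + t.val) (a + s.val) (by omega) (by omega) (by omega) h.symm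
  -- sign facts
  have hposcell : ∀ s : Fin (k + 2), 0 < w (I s, J s) := by
    intro s
    simp only [hIdef, hJdef]
    by_cases hs0 : s.val = 0
    · rw [if_pos hs0, hs0]
      simpa using hclose
    · rw [if_neg hs0]
      exact hpos (a + s.val)
  have hnegcell : ∀ s : Fin (k + 2), w (I s, J (s + 1)) < 0 := by
    intro s
    have hs := s.isLt
    have hval : ((s + 1 : Fin (k + 2)) : ℕ) = if s = Fin.last (k + 1) then 0 else s.val + 1 :=
      Fin.val_add_one s
    simp only [hIdef, hJdef]
    by_cases hlast : s = Fin.last (k + 1)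
    · rw [if_pos hlast] at hval
      rw [hval]
      simp only [if_pos rfl]
      have e1 : a + s.val = b - 1 := by
        rw [hlast]; simp [Fin.last]; omega
      have := hneg (b - 1)
      have e2 : b - 1 + 1 = b := by omega
      rw [e2] at this
      rw [e1]
      exact this
    · rw [if_neg hlast] at hval
      rw [hval]
      rw [if_neg (by omega : ¬ s.val + 1 = 0)]
      have e1 : a + (s.val + 1) = a + s.val + 1 := by omega
      rw [e1]
      exact hneg (a + s.val)
  refine ⟨cyc I J, ⟨k, ?_, I, J, hI, hJ, rfl⟩, ?_⟩
  · have h1 : k + 2 ≤ p := by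
      have := Fintype.card_le_of_injective I hI
      simpa using this
    have h2 : k + 2 ≤ r := by
      have := Fintype.card_le_of_injective J hJ
      simpa using this
    omega
  · intro c
    rcases cyc_cases hI hJ c with ⟨t, rfl, hv⟩ | ⟨t, rfl, hv⟩ | hv
    · left
      rw [hv]
      have := hposcell t
      omega
    · right
      rw [hv]
      have := hnegcell t
      omega
    · rw [hv]
      rcases le_total 0 (w c) with h | h
      · left; omega
      · right; omega

lemma walk_lemma {w : Fin p × Fin r → ℤ} (hw : w ∈ rc p r) (hne : w ≠ 0) :
    ∃ m ∈ moves2 p r, between m w := by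
  classical
  obtain ⟨c₀, hc₀⟩ := exists_pos_entry hw hne
  have hstep : ∀ s : {c : Fin p × Fin r // 0 < w c},
      ∃ s' : {c : Fin p × Fin r // 0 < w c}, w (s.1.1, s'.1.2) < 0 := by
    intro s
    obtain ⟨y', hy'⟩ := row_neg hw (show 0 < w (s.1.1, s.1.2) from s.2)
    obtain ⟨x', hx'⟩ := col_pos hw hy'
    exact ⟨⟨(x', y'), hx'⟩, hy'⟩
  choose F hF using hstep
  set seq : ℕ → {c : Fin p × Fin r // 0 < w c} := fun n => F^[n] ⟨c₀, hc₀⟩ with hseq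
  have hseqS : ∀ n, seq (n + 1) = F (seq n) := fun n => Function.iterate_succ_apply' F n _
  set ρ : ℕ → Fin p := fun n => (seq n).1.1 with hρ
  set σ : ℕ → Fin r := fun n => (seq n).1.2 with hσ
  have hpos : ∀ n, 0 < w (ρ n, σ n) := fun n => (seq n).2
  have hneg : ∀ n, w (ρ n, σ (n + 1)) < 0 := by
    intro n
    have h := hF (seq n)
    have e : σ (n + 1) = (F (seq n)).1.2 := by rw [hσ]; simp only [hseqS n]
    rw [hρ]
    simp only []
    rw [e]
    exact h
  -- vertex sequence
  set V : ℕ → Fin p ⊕ Fin r :=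
    fun n => if n % 2 = 0 then Sum.inr (σ (n / 2)) else Sum.inl (ρ (n / 2)) with hV
  have hVeven : ∀ n, V (2 * n) = Sum.inr (σ n) := by
    intro n
    simp only [hV]
    rw [if_pos (by omega : (2 * n) % 2 = 0), show 2 * n / 2 = n by omega]
  have hVodd : ∀ n, V (2 * n + 1) = Sum.inl (ρ n) := by
    intro n
    simp only [hV]
    rw [if_neg (by omega : ¬ (2 * n + 1) % 2 = 0), show (2 * n + 1) / 2 = n by omega]
  have hrep : ∃ y, ∃ x, x < y ∧ V x = V y := by
    obtain ⟨x, y, hxy, hVxy⟩ := Finite.exists_ne_map_eq_of_infinite V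
    rcases Nat.lt_or_ge x y with h | h
    · exact ⟨y, x, h, hVxy⟩
    · exact ⟨x, y, by omega, hVxy.symm⟩
  obtain ⟨A, hAB, hVAB⟩ := Nat.find_spec hrep
  obtain ⟨B, hBdef⟩ : ∃ B, B = Nat.find hrep := ⟨_, rfl⟩
  rw [← hBdef] at hAB hVAB
  have hmin : ∀ y x, x < y → y < B → V x ≠ V y := by
    intro y x hxy hyB hVeq
    exact Nat.find_min hrep (hBdef ▸ hyB) ⟨x, hxy, hVeq⟩
  -- parity
  have hparity : A % 2 = B % 2 := by
    rcases Nat.mod_two_eq_zero_or_one A with hA | hA <;>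
      rcases Nat.mod_two_eq_zero_or_one B with hBp | hBp
    · omega
    · exfalso
      rw [show A = 2 * (A / 2) by omega, show B = 2 * (B / 2) + 1 by omega] at hVAB
      rw [hVeven, hVodd] at hVAB
      simp at hVAB
    · exfalso
      rw [show A = 2 * (A / 2) + 1 by omega, show B = 2 * (B / 2) by omega] at hVAB
      rw [hVeven, hVodd] at hVAB
      simp at hVAB
    · omega
  rcases Nat.mod_two_eq_zero_or_one B with hBeven | hBodd
  · -- column repetition
    obtain ⟨a, hA2⟩ : ∃ a, A = 2 * a := ⟨A / 2, by omega⟩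
    obtain ⟨b, hB2⟩ : ∃ b, B = 2 * b := ⟨B / 2, by omega⟩
    have hσab : σ a = σ b := by
      rw [hA2, hB2, hVeven, hVeven] at hVAB
      simpa using hVAB
    have hab : a < b := by omega
    have hab2 : a + 2 ≤ b := by
      rcases Nat.lt_or_ge (a + 1) b with h | h
      · omega
      · exfalso
        have hb1 : b = a + 1 := by omega
        have h1 := hpos a
        have h2 := hneg a
        rw [← hb1] at h2
        rw [← hσab] at h2
        omega
    refine build_move ρ σ a b hab2 hpos hneg ?_ ?_ ?_ ?_
    · rw [← hσab]; exact hpos a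
    · intro s t hs hst htb heq
      refine hmin (2 * t + 1) (2 * s + 1) (by omega) (by omega) ?_
      rw [hVodd, hVodd, heq]
    · intro s t hs hst htb heq
      refine hmin (2 * t) (2 * s) (by omega) (by omega) ?_
      rw [hVeven, hVeven, heq]
    · intro s hs hsb heq
      rw [← hσab] at heq
      refine hmin (2 * s) (2 * a) (by omega) (by omega) ?_
      rw [hVeven, hVeven, heq]
  · -- row repetition
    obtain ⟨a, hA2⟩ : ∃ a, A = 2 * a + 1 := ⟨A / 2, by omega⟩
    obtain ⟨b, hB2⟩ : ∃ b, B = 2 * b + 1 := ⟨B / 2, by omega⟩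
    have hρab : ρ a = ρ b := by
      rw [hA2, hB2, hVodd, hVodd] at hVAB
      simpa using hVAB
    have hab : a < b := by omega
    have hab2 : a + 2 ≤ b := by
      rcases Nat.lt_or_ge (a + 1) b with h | h
      · omega
      · exfalso
        have hb1 : b = a + 1 := by omega
        have h1 := hpos b
        have h2 := hneg a
        rw [← hρab] at h1
        rw [← hb1] at h2
        omega
    refine build_move ρ σ a b hab2 hpos hneg ?_ ?_ ?_ ?_
    · rw [hρab]; exact hpos b
    · intro s t hs hst htb heq
      refine hmin (2 * t + 1) (2 * s + 1) (by omega) (by omega) ?_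
      rw [hVodd, hVodd, heq]
    · intro s t hs hst htb heq
      refine hmin (2 * t) (2 * s) (by omega) (by omega) ?_
      rw [hVeven, hVeven, heq]
    · intro s hs hsb heq
      refine hmin (2 * b) (2 * s) (by omega) (by omega) ?_
      rw [hVeven, hVeven, heq]

lemma between_trans {ι : Type*} {g m w : ι → ℤ} (h1 : between g (w - m))
    (h2 : between m w) : between g w := by
  intro c
  have a1 := h1 c
  have a2 := h2 c
  have e : (w - m) c = w c - m c := rfl
  rw [e] at a1
  omega

theorem rc_dec (w : Fin p × Fin r → ℤ) (hw : w ∈ rc p r) :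
    ∃ G : List (Fin p × Fin r → ℤ),
      (∀ g ∈ G, g ∈ moves2 p r ∧ between g w) ∧ w = G.sum := by
  classical
  suffices H : ∀ N, ∀ w : Fin p × Fin r → ℤ, w ∈ rc p r →
      (∑ c, (w c).natAbs) ≤ N →
      ∃ G : List (Fin p × Fin r → ℤ),
        (∀ g ∈ G, g ∈ moves2 p r ∧ between g w) ∧ w = G.sum by
    exact H _ w hw le_rfl
  intro N
  induction N with
  | zero =>
    intro w hw hN
    have hz : ∀ c, w c = 0 := by
      intro c
      have h1 : (w c).natAbs = 0 := by
        by_contra h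
        have h2 : 0 < ∑ c, (w c).natAbs :=
          Finset.sum_pos' (fun _ _ => Nat.zero_le _)
            ⟨c, Finset.mem_univ c, Nat.pos_of_ne_zero h⟩
        omega
      omega
    exact ⟨[], by simp, funext fun c => by simp [hz c]⟩
  | succ N ih =>
    intro w hw hN
    by_cases hw0 : w = 0
    · exact ⟨[], by simp, by simp [hw0]⟩
    · obtain ⟨m, hm, hbm⟩ := walk_lemma hw hw0
      have hwm : w - m ∈ rc p r := rc_sub hw (moves2_mem_rc hm)
      have habs : ∀ c, ((w - m) c).natAbs = (w c).natAbs - (m c).natAbs ∧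
          (m c).natAbs ≤ (w c).natAbs := by
        intro c
        have := hbm c
        have e : (w - m) c = w c - m c := rfl
        rw [e]
        omega
      have hmne : ∃ c, m c ≠ 0 := Function.ne_iff.1 (moves2_ne_zero hm)
      obtain ⟨c₀, hc₀⟩ := hmne
      have hc₀' : m c₀ ≠ 0 := hc₀
      have hlt : (∑ c, ((w - m) c).natAbs) < ∑ c, (w c).natAbs := by
        apply Finset.sum_lt_sum (fun c _ => by have := habs c; omega)
        refine ⟨c₀, Finset.mem_univ c₀, ?_⟩
        have := habs c₀
        omega
      obtain ⟨G, hG, hGsum⟩ := ih (w - m) hwm (by omega)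
      refine ⟨m :: G, ?_, ?_⟩
      · intro g hg
        rcases List.mem_cons.1 hg with rfl | hg
        · exact ⟨hm, hbm⟩
        · exact ⟨(hG g hg).1, between_trans (hG g hg).2 hbm⟩
      · rw [List.sum_cons, ← hGsum]
        abel

def phi (w : Fin p × Fin r → ℤ) : Fin p × Fin 2 × Fin r → ℤ :=
  fun x => if x.2.1 = 0 then w (x.1, x.2.2) else -w (x.1, x.2.2)

lemma phi_apply0 (w : Fin p × Fin r → ℤ) (i : Fin p) (j : Fin r) :
    phi w (i, 0, j) = w (i, j) := by simp [phi]

lemma phi_apply1 (w : Fin p × Fin r → ℤ) (i : Fin p) (j : Fin r) :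
    phi w (i, 1, j) = -w (i, j) := by
  have : (1 : Fin 2) ≠ 0 := by decide
  simp [phi, this]

lemma mv_inl (v : Fin p × Fin 2 × Fin r → ℤ) (i : Fin p) (s : Fin 2) :
    (designC3 p r).mulVec v (Sum.inl (i, s)) = ∑ j, v (i, s, j) := by
  simp only [Matrix.mulVec, dotProduct, designC3, Matrix.of_apply, Sum.elim_inl]
  rw [Fintype.sum_prod_type]
  simp only [Fintype.sum_prod_type]
  simp [Prod.mk.injEq, ite_and, ite_mul, one_mul, zero_mul, Finset.sum_ite_eq,
    Finset.sum_ite_eq']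

lemma mv_inr1 (v : Fin p × Fin 2 × Fin r → ℤ) (i : Fin p) (j : Fin r) :
    (designC3 p r).mulVec v (Sum.inr (Sum.inl (i, j))) = v (i, 0, j) + v (i, 1, j) := by
  simp only [Matrix.mulVec, dotProduct, designC3, Matrix.of_apply, Sum.elim_inr,
    Sum.elim_inl]
  rw [Fintype.sum_prod_type]
  simp only [Fintype.sum_prod_type]
  simp [Prod.mk.injEq, ite_and, ite_mul, one_mul, zero_mul, Finset.sum_ite_eq,
    Finset.sum_ite_eq', Fin.sum_univ_two]

lemma mv_inr2 (v : Fin p × Fin 2 × Fin r → ℤ) (s : Fin 2) (j : Fin r) :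
    (designC3 p r).mulVec v (Sum.inr (Sum.inr (s, j))) = ∑ i, v (i, s, j) := by
  simp only [Matrix.mulVec, dotProduct, designC3, Matrix.of_apply, Sum.elim_inr]
  rw [Fintype.sum_prod_type]
  simp only [Fintype.sum_prod_type]
  simp [Prod.mk.injEq, ite_and, ite_mul, one_mul, zero_mul, Finset.sum_ite_eq,
    Finset.sum_ite_eq']

lemma lat_iff (v : Fin p × Fin 2 × Fin r → ℤ) :
    (designC3 p r).mulVec v = 0 ↔ ∃ w, w ∈ rc p r ∧ v = phi w := by
  constructor
  · intro hv
    have hz : ∀ k, (designC3 p r).mulVec v k = 0 := fun k => congrFun hv k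
    have h13 : ∀ i j, v (i, 0, j) + v (i, 1, j) = 0 := by
      intro i j
      have := hz (Sum.inr (Sum.inl (i, j)))
      rwa [mv_inr1] at this
    refine ⟨fun c => v (c.1, 0, c.2), ⟨?_, ?_⟩, ?_⟩
    · intro i
      have := hz (Sum.inl (i, 0))
      rwa [mv_inl] at this
    · intro j
      have := hz (Sum.inr (Sum.inr (0, j)))
      rwa [mv_inr2] at this
    · funext x
      obtain ⟨i, s, j⟩ := x
      fin_cases s
      · show v (i, 0, j) = phi (fun c => v (c.1, 0, c.2)) (i, 0, j)
        rw [phi_apply0]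
      · show v (i, 1, j) = phi (fun c => v (c.1, 0, c.2)) (i, 1, j)
        rw [phi_apply1]
        have := h13 i j
        simp only []
        omega
  · rintro ⟨w, hw, rfl⟩
    funext k
    rcases k with ⟨i, s⟩ | ⟨⟨i, j⟩ | ⟨s, j⟩⟩
    · show (designC3 p r).mulVec (phi w) (Sum.inl (i, s)) = 0
      rw [mv_inl]
      fin_cases s
      · show (∑ j, phi w (i, 0, j)) = 0
        simp only [phi_apply0]
        exact hw.1 i
      · show (∑ j, phi w (i, 1, j)) = 0
        simp only [phi_apply1, Finset.sum_neg_distrib, hw.1 i, neg_zero]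
    · show (designC3 p r).mulVec (phi w) (Sum.inr (Sum.inl (i, j))) = 0
      rw [mv_inr1, phi_apply0, phi_apply1]
      simp
    · show (designC3 p r).mulVec (phi w) (Sum.inr (Sum.inr (s, j))) = 0
      rw [mv_inr2]
      fin_cases s
      · show (∑ i, phi w (i, 0, j)) = 0
        simp only [phi_apply0]
        exact hw.2 j
      · show (∑ i, phi w (i, 1, j)) = 0
        simp only [phi_apply1, Finset.sum_neg_distrib, hw.2 j, neg_zero]

lemma move_eq_phi {k : ℕ} (I : Fin (k + 2) → Fin p) (J : Fin (k + 2) → Fin r) :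
    (∑ t : Fin (k + 2),
        (Pi.single (I t, (0 : Fin 2), J t) (1 : ℤ)
          - Pi.single (I t, (1 : Fin 2), J t) 1
          + Pi.single (I t, (1 : Fin 2), J (t + 1)) 1
          - Pi.single (I t, (0 : Fin 2), J (t + 1)) 1))
      = phi (cyc I J) := by
  have h01 : ¬ ((0 : Fin 2) = 1) := by decide
  have h10 : ¬ ((1 : Fin 2) = 0) := by decide
  funext x
  obtain ⟨a, s, b⟩ := x
  have hL : ∀ s' : Fin 2, ((∑ t : Fin (k + 2),
      (Pi.single (I t, (0 : Fin 2), J t) (1 : ℤ)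
        - Pi.single (I t, (1 : Fin 2), J t) 1
        + Pi.single (I t, (1 : Fin 2), J (t + 1)) 1
        - Pi.single (I t, (0 : Fin 2), J (t + 1)) 1)) : Fin p × Fin 2 × Fin r → ℤ) (a, s', b)
      = ∑ t : Fin (k + 2),
        ((if (a, s', b) = (I t, (0 : Fin 2), J t) then (1:ℤ) else 0)
          - (if (a, s', b) = (I t, (1 : Fin 2), J t) then 1 else 0)
          + (if (a, s', b) = (I t, (1 : Fin 2), J (t + 1)) then 1 else 0)
          - (if (a, s', b) = (I t, (0 : Fin 2), J (t + 1)) then 1 else 0)) := by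
    intro s'
    simp [Finset.sum_apply, Pi.single_apply]
  have hs : s = 0 ∨ s = 1 := by
    rcases s with ⟨v, hv⟩
    have : v = 0 ∨ v = 1 := by omega
    rcases this with rfl | rfl
    · exact Or.inl rfl
    · exact Or.inr rfl
  rcases hs with rfl | rfl
  · rw [phi_apply0, cyc_apply, hL 0]
    apply Finset.sum_congr rfl
    intro t _
    have e1 : ((a, (0 : Fin 2), b) = (I t, (0 : Fin 2), J t)) ↔ ((a, b) = (I t, J t)) := by
      simp [Prod.mk.injEq]
    have e2 : ¬ ((a, (0 : Fin 2), b) = (I t, (1 : Fin 2), J t)) := by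
      simp [Prod.mk.injEq, h01]
    have e3 : ¬ ((a, (0 : Fin 2), b) = (I t, (1 : Fin 2), J (t + 1))) := by
      simp [Prod.mk.injEq, h01]
    have e4 : ((a, (0 : Fin 2), b) = (I t, (0 : Fin 2), J (t + 1))) ↔
        ((a, b) = (I t, J (t + 1))) := by
      simp [Prod.mk.injEq]
    rw [if_neg e2, if_neg e3]
    by_cases hc1 : (a, b) = (I t, J t) <;> by_cases hc2 : (a, b) = (I t, J (t + 1)) <;>
      simp [e1, e4, hc1, hc2] <;> ring
  · rw [phi_apply1, cyc_apply, hL 1, ← Finset.sum_neg_distrib]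
    apply Finset.sum_congr rfl
    intro t _
    have e1 : ¬ ((a, (1 : Fin 2), b) = (I t, (0 : Fin 2), J t)) := by
      simp [Prod.mk.injEq, h10]
    have e2 : ((a, (1 : Fin 2), b) = (I t, (1 : Fin 2), J t)) ↔ ((a, b) = (I t, J t)) := by
      simp [Prod.mk.injEq]
    have e3 : ((a, (1 : Fin 2), b) = (I t, (1 : Fin 2), J (t + 1))) ↔
        ((a, b) = (I t, J (t + 1))) := by
      simp [Prod.mk.injEq]
    have e4 : ¬ ((a, (1 : Fin 2), b) = (I t, (0 : Fin 2), J (t + 1))) := by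
      simp [Prod.mk.injEq, h10]
    rw [if_neg e1, if_neg e4]
    by_cases hc1 : (a, b) = (I t, J t) <;> by_cases hc2 : (a, b) = (I t, J (t + 1)) <;>
      simp [e2, e3, hc1, hc2] <;> ring

lemma movesC3_eq : movesC3 p r = phi '' moves2 p r := by
  ext f
  constructor
  · rintro ⟨k, hk, I, J, hI, hJ, rfl⟩
    exact ⟨cyc I J, ⟨k, hk, I, J, hI, hJ, rfl⟩, (move_eq_phi I J).symm⟩
  · rintro ⟨g, ⟨k, hk, I, J, hI, hJ, rfl⟩, rfl⟩
    exact ⟨k, hk, I, J, hI, hJ, (move_eq_phi I J).symm⟩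

lemma phi_zero : phi (0 : Fin p × Fin r → ℤ) = 0 := by
  funext x
  simp [phi]

lemma phi_eq_zero {w : Fin p × Fin r → ℤ} (h : phi w = 0) : w = 0 := by
  funext c
  have := congrFun h (c.1, 0, c.2)
  rw [show ((c.1, (0 : Fin 2), c.2) : Fin p × Fin 2 × Fin r) = (c.1, 0, c.2) from rfl] at this
  rw [phi_apply0] at this
  exact this

lemma phi_sub (w₁ w₂ : Fin p × Fin r → ℤ) : phi (w₁ - w₂) = phi w₁ - phi w₂ := by
  funext x
  simp only [phi, Pi.sub_apply]
  split_ifs <;> ring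

lemma phi_add (w₁ w₂ : Fin p × Fin r → ℤ) : phi (w₁ + w₂) = phi w₁ + phi w₂ := by
  funext x
  simp only [phi, Pi.add_apply]
  split_ifs <;> ring

lemma phi_list_sum (G : List (Fin p × Fin r → ℤ)) : (G.map phi).sum = phi G.sum := by
  induction G with
  | nil => simp [phi_zero]
  | cons g T ih => simp [List.sum_cons, phi_add, ih]

lemma between_phi {g w : Fin p × Fin r → ℤ} (h : between g w) :
    between (phi g) (phi w) := by
  intro x
  have := h (x.1, x.2.2)
  simp only [phi]
  split_ifs <;> omega


/-- Theorem 5.2: for `d = (p,2,r)` the moves `f_{i,j}` form the Graver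
basis of `ker_ℤ ℬ_{C₃,d}`; in particular they are a Gröbner basis for every additive
preorder. -/
theorem stmt_16 (p r : ℕ) :
    movesC3 p r = graver {v | (designC3 p r).mulVec v = 0} ∧
    ∀ R, isAddPreorder R →
      isGroebner (latFam {v | (designC3 p r).mulVec v = 0}) (movesC3 p r) R := by
  set Lat : Set (Fin p × Fin 2 × Fin r → ℤ) := {v | (designC3 p r).mulVec v = 0} with hLat
  have hlat0 : (0 : Fin p × Fin 2 × Fin r → ℤ) ∈ Lat := by
    show (designC3 p r).mulVec 0 = 0
    exact Matrix.mulVec_zero _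
  have hsub : ∀ a ∈ Lat, ∀ b ∈ Lat, a - b ∈ Lat := by
    intro a ha b hb
    obtain ⟨w₁, hw₁, rfl⟩ := (lat_iff a).1 ha
    obtain ⟨w₂, hw₂, rfl⟩ := (lat_iff b).1 hb
    have : phi w₁ - phi w₂ = phi (w₁ - w₂) := (phi_sub w₁ w₂).symm
    rw [this]
    exact (lat_iff _).2 ⟨w₁ - w₂, rc_sub hw₁ hw₂, rfl⟩
  have hMLat : movesC3 p r ⊆ Lat := by
    intro m hm
    rw [movesC3_eq] at hm
    obtain ⟨g, hg, rfl⟩ := hm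
    exact (lat_iff _).2 ⟨g, moves2_mem_rc hg, rfl⟩
  have hMne : ∀ m ∈ movesC3 p r, m ≠ (0 : Fin p × Fin 2 × Fin r → ℤ) := by
    intro m hm h0
    rw [movesC3_eq] at hm
    obtain ⟨g, hg, rfl⟩ := hm
    exact moves2_ne_zero hg (phi_eq_zero h0)
  have hdec : ∀ v ∈ Lat, ∃ G : List (Fin p × Fin 2 × Fin r → ℤ),
      (∀ g ∈ G, g ∈ movesC3 p r ∧ between g v) ∧ v = G.sum := by
    intro v hv
    obtain ⟨w, hw, rfl⟩ := (lat_iff v).1 hv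
    obtain ⟨G₂, hG₂, hG₂sum⟩ := rc_dec w hw
    refine ⟨G₂.map phi, ?_, ?_⟩
    · intro g hg
      obtain ⟨g₂, hg₂, rfl⟩ := List.mem_map.1 hg
      refine ⟨?_, between_phi (hG₂ g₂ hg₂).2⟩
      rw [movesC3_eq]
      exact ⟨g₂, (hG₂ g₂ hg₂).1, rfl⟩
    · rw [phi_list_sum, ← hG₂sum]
  have hprim : ∀ m ∈ movesC3 p r, ∀ v₁ v₂ : Fin p × Fin 2 × Fin r → ℤ,
      v₁ ∈ Lat → v₂ ∈ Lat → m = v₁ + v₂ →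
      (∀ i, 0 ≤ v₁ i * v₂ i) → v₁ = 0 ∨ v₂ = 0 := by
    intro m hm v₁ v₂ h1 h2 hsum hpr
    rw [movesC3_eq] at hm
    obtain ⟨g, hg, rfl⟩ := hm
    obtain ⟨k, hk, I, J, hI, hJ, rfl⟩ := hg
    obtain ⟨w₁, hw₁, rfl⟩ := (lat_iff v₁).1 h1
    obtain ⟨w₂, hw₂, rfl⟩ := (lat_iff v₂).1 h2
    have hws : cyc I J = w₁ + w₂ := by
      funext c
      have he := congrFun hsum (c.1, 0, c.2)
      have e1 : phi (cyc I J) (c.1, 0, c.2) = cyc I J (c.1, c.2) := phi_apply0 _ c.1 c.2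
      have e2 : (phi w₁ + phi w₂) (c.1, 0, c.2)
          = phi w₁ (c.1, 0, c.2) + phi w₂ (c.1, 0, c.2) := rfl
      have e3 : phi w₁ (c.1, 0, c.2) = w₁ (c.1, c.2) := phi_apply0 _ c.1 c.2
      have e4 : phi w₂ (c.1, 0, c.2) = w₂ (c.1, c.2) := phi_apply0 _ c.1 c.2
      rw [e1, e2, e3, e4] at he
      exact he
    have hprw : ∀ c, 0 ≤ w₁ c * w₂ c := by
      intro c
      have he := hpr (c.1, 0, c.2)
      have e3 : phi w₁ (c.1, 0, c.2) = w₁ (c.1, c.2) := phi_apply0 _ c.1 c.2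
      have e4 : phi w₂ (c.1, 0, c.2) = w₂ (c.1, c.2) := phi_apply0 _ c.1 c.2
      rw [e3, e4] at he
      exact he
    rcases cyc_primitive hI hJ w₁ w₂ hw₁ hw₂ hws hprw with h | h
    · left; rw [h, phi_zero]
    · right; rw [h, phi_zero]
  constructor
  · exact abstract_graver Lat (movesC3 p r) hsub hMLat hMne hdec hprim
  · intro R hR
    exact abstract_groebner Lat (movesC3 p r) hlat0 hsub hMLat hdec R hR

end Stmt16
end

section
/- Let ℬ₁,…,ℬ_r be integer matrices with 𝒜-gradings φ₁,…,φ_r, and let m₁ ∈ ker_ℤ ℬ₁, …, m_r ∈ ker_ℤ ℬ_r be lifts of the same move g ∈ ℤ^𝒜, i.e., φᵢ(mᵢ) = g for all i. Then any glued move m̃ ∈ Glues(m₁, …, m_r) satisfies deg(m̃) ≤ deg(g) + deg(max_{i=1,…,r}(φᵢ(mᵢ⁺) − g⁺)), where the max is taken coordinatewise and deg(v) = max{‖v⁺‖₁, ‖v⁻‖₁}. -/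
namespace Stmt17

/-- Marginalization map induced by `φ : [n] → [t]`. -/
def marg {n t : ℕ} (φ : Fin n → Fin t) (v : Fin n → ℤ) : Fin t → ℤ :=
  fun a => ∑ i, if φ i = a then v i else 0

/-- Index set of the iterated toric fiber product `ℬ₁ ×_𝒜 ⋯ ×_𝒜 ℬ_r`: tuples of
column indices with a common `𝒜`-degree. -/
abbrev multiIdx (r t : ℕ) (n : Fin r → ℕ) (φ : ∀ k, Fin (n k) → Fin t) :=
  {f : ∀ k, Fin (n k) // ∃ a : Fin t, ∀ k, φ k (f k) = a}

/-- The `k`-th projection `ψ_k`, sending `e_f` to `e_{f(k)}`. -/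
def psiMulti {r t : ℕ} {n : Fin r → ℕ} {φ : ∀ k, Fin (n k) → Fin t}
    (k : Fin r) (w : multiIdx r t n φ → ℤ) : Fin (n k) → ℤ :=
  fun i => ∑ f : multiIdx r t n φ, if f.1 k = i then w f else 0

def pos {ι : Type*} (v : ι → ℤ) : ι → ℤ := fun i => max (v i) 0
def neg {ι : Type*} (v : ι → ℤ) : ι → ℤ := fun i => max (-v i) 0

/-- `deg(v) = max(‖v⁺‖₁, ‖v⁻‖₁)`. -/
def deg {ι : Type*} [Fintype ι] (v : ι → ℤ) : ℤ :=
  max (∑ i, pos v i) (∑ i, neg v i)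

/-- `mt` is a glue of the lifts `m₁, …, m_r`:  `mt = P − N` with `P, N ≥ 0`,
`ψ_k P = m_k⁺ + a_k`, `ψ_k N = m_k⁻ + a_k` for nonnegative extensions `a_k` with
`φ_k(m_k⁺ + a_k) = Mx`, the coordinatewise maximum of the `φ_i(m_i⁺)`. -/
def isMultiGlue {r t : ℕ} {n : Fin r → ℕ} {φ : ∀ k, Fin (n k) → Fin t}
    (m : ∀ k, Fin (n k) → ℤ) (Mx : Fin t → ℤ) (mt : multiIdx r t n φ → ℤ) : Prop :=
  ∃ P N : multiIdx r t n φ → ℤ, 0 ≤ P ∧ 0 ≤ N ∧ mt = P - N ∧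
    ∃ a : ∀ k, Fin (n k) → ℤ, (∀ k, 0 ≤ a k) ∧
      (∀ k, psiMulti k P = pos (m k) + a k) ∧
      (∀ k, psiMulti k N = neg (m k) + a k) ∧
      (∀ k, marg (φ k) (pos (m k) + a k) = Mx)

lemma sum_marg {n t : ℕ} (φ : Fin n → Fin t) (v : Fin n → ℤ) :
    ∑ a, marg φ v a = ∑ i, v i := by
  unfold marg
  rw [Finset.sum_comm]
  simp

lemma sum_psi {r t : ℕ} {n : Fin r → ℕ} {φ : ∀ k, Fin (n k) → Fin t}
    (k : Fin r) (w : multiIdx r t n φ → ℤ) :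
    ∑ i, psiMulti k w i = ∑ f, w f := by
  unfold psiMulti
  rw [Finset.sum_comm]
  simp

lemma marg_pos_ge {n t : ℕ} (φ : Fin n → Fin t) (v : Fin n → ℤ) (x : Fin t) :
    pos (marg φ v) x ≤ marg φ (pos v) x := by
  unfold marg pos
  rw [max_le_iff]
  constructor
  · exact Finset.sum_le_sum (fun i _ => by split <;> simp [pos, le_max_iff] <;> omega)
  · exact Finset.sum_nonneg (fun i _ => by split <;> simp [le_max_right])

/-- Lemma 6.1: the degree of any glue of lifts `m₁, …, m_r` of the
same move `g` is bounded by `deg(g) + deg(max_i(φ_i(m_i⁺) − g⁺))`. -/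
theorem stmt_17 (r s t : ℕ) (hr : 0 < r) (h n : Fin r → ℕ)
    (A : Matrix (Fin s) (Fin t) ℤ)
    (B : ∀ k, Matrix (Fin (h k)) (Fin (n k)) ℤ)
    (φ : ∀ k, Fin (n k) → Fin t)
    (hgr : ∀ k v, (B k).mulVec v = 0 → A.mulVec (marg (φ k) v) = 0)
    (g : Fin t → ℤ) (m : ∀ k, Fin (n k) → ℤ)
    (hker : ∀ k, (B k).mulVec (m k) = 0)
    (hlift : ∀ k, marg (φ k) (m k) = g)
    (Mx : Fin t → ℤ)
    (hMx1 : ∀ (k : Fin r) (a : Fin t), marg (φ k) (pos (m k)) a ≤ Mx a)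
    (hMx2 : ∀ a : Fin t, ∃ k : Fin r, Mx a = marg (φ k) (pos (m k)) a)
    (mt : multiIdx r t n φ → ℤ)
    (hglue : isMultiGlue m Mx mt) :
    deg mt ≤ deg g + deg (fun a => Mx a - pos g a) := by
  obtain ⟨P, N, hP, hN, hmt, a, ha, hPk, hNk, hMk⟩ := hglue
  set k0 : Fin r := ⟨0, hr⟩
  -- pointwise nonnegativity of Mx - pos g
  have hMxg : ∀ x, pos g x ≤ Mx x := fun x => by
    calc pos g x = pos (marg (φ k0) (m k0)) x := by rw [hlift k0]
    _ ≤ marg (φ k0) (pos (m k0)) x := marg_pos_ge _ _ _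
    _ ≤ Mx x := hMx1 k0 x
  -- total sums
  have sumP : ∑ f, P f = ∑ x, Mx x := by
    rw [← sum_psi k0 P, hPk k0, ← sum_marg (φ k0), hMk k0]
  have sumN : ∑ f, N f = ∑ x, Mx x - ∑ x, g x := by
    rw [← sum_psi k0 N, hNk k0]
    have e1 : ∀ i, (neg (m k0) + a k0) i = (pos (m k0) + a k0) i - (m k0) i := by
      intro i; simp only [Pi.add_apply, pos, neg]; omega
    rw [Finset.sum_congr rfl (fun i _ => e1 i), Finset.sum_sub_distrib,
      ← sum_marg (φ k0) (pos (m k0) + a k0), hMk k0,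
      ← sum_marg (φ k0) (m k0), hlift k0]
  -- bound the two parts of deg mt
  have hpos : ∑ f, pos mt f ≤ ∑ x, Mx x := by
    rw [← sumP]
    refine Finset.sum_le_sum (fun f _ => ?_)
    have h1 := hP f; have h2 := hN f
    simp only [Pi.zero_apply] at h1 h2
    simp only [pos, hmt, Pi.sub_apply]
    omega
  have hneg : ∑ f, neg mt f ≤ ∑ x, Mx x - ∑ x, g x := by
    rw [← sumN]
    refine Finset.sum_le_sum (fun f _ => ?_)
    have h1 := hP f; have h2 := hN f
    simp only [Pi.zero_apply] at h1 h2
    simp only [neg, hmt, Pi.sub_apply]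
    omega
  -- compute the RHS degrees
  have hdeg2 : deg (fun x => Mx x - pos g x) = ∑ x, Mx x - ∑ x, pos g x := by
    unfold deg
    have e1 : ∀ x : Fin t, pos (fun x => Mx x - pos g x) x = Mx x - pos g x := by
      intro x; have := hMxg x; simp only [pos] at *; omega
    have e2 : ∀ x : Fin t, neg (fun x => Mx x - pos g x) x = 0 := by
      intro x; have := hMxg x; simp only [pos, neg] at *; omega
    rw [Finset.sum_congr rfl (fun x _ => e1 x), Finset.sum_congr rfl (fun x _ => e2 x),
      Finset.sum_sub_distrib]
    simp only [Finset.sum_const_zero]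
    exact max_eq_left (sub_nonneg.mpr (Finset.sum_le_sum fun x _ => hMxg x))
  have hsg : ∑ x, g x = ∑ x, pos g x - ∑ x, neg g x := by
    rw [← Finset.sum_sub_distrib]
    refine Finset.sum_congr rfl (fun x _ => ?_)
    simp only [pos, neg]; omega
  -- finish
  rw [hdeg2]
  unfold deg
  rw [max_le_iff]
  have hle1 : ∑ x, pos g x ≤ max (∑ x, pos g x) (∑ x, neg g x) := le_max_left _ _
  have hle2 : ∑ x, neg g x ≤ max (∑ x, pos g x) (∑ x, neg g x) := le_max_right _ _
  constructor <;> omega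

end Stmt17
end

section
/- Let ℬ be an 𝒜-graded integer matrix (via φ) such that there is a finite PFI Markov basis 𝒢 connecting every finite intersection ∩_{i=1}^{r} φ(F(ℬ, bᵢ)) for all r ∈ ℕ and bᵢ ∈ ℕℬ. Then there exists a constant C > 0 such that the Markov degree of the r-fold toric fiber power ×_𝒜^r ℬ is at most C for every r > 0. -/
namespace Stmt18

/-- Marginalization map induced by `φ : [n] → [t]`. -/
def marg {n t : ℕ} (φ : Fin n → Fin t) (v : Fin n → ℤ) : Fin t → ℤ :=
  fun a => ∑ i, if φ i = a then v i else 0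

def mstep {ι : Type*} (F M : Set (ι → ℤ)) (u v : ι → ℤ) : Prop :=
  u ∈ F ∧ v ∈ F ∧ (v - u ∈ M ∨ u - v ∈ M)

def connects {ι : Type*} (M F : Set (ι → ℤ)) : Prop :=
  ∀ u ∈ F, ∀ v ∈ F, Relation.ReflTransGen (mstep F M) u v

def pos {ι : Type*} (v : ι → ℤ) : ι → ℤ := fun i => max (v i) 0
def neg {ι : Type*} (v : ι → ℤ) : ι → ℤ := fun i => max (-v i) 0

/-- `deg(v) = max(‖v⁺‖₁, ‖v⁻‖₁)`. -/
def deg {ι : Type*} [Fintype ι] (v : ι → ℤ) : ℤ :=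
  max (∑ i, pos v i) (∑ i, neg v i)

/-- Index set of the `r`-fold toric fiber power `×_𝒜^r ℬ`. -/
abbrev powIdx (r n t : ℕ) (φ : Fin n → Fin t) :=
  {f : Fin r → Fin n // ∃ a : Fin t, ∀ k, φ (f k) = a}

/-- The matrix of the `r`-fold toric fiber power `×_𝒜^r ℬ`: its column indexed by
`f` is `(b_{f 1}; …; b_{f r})`. -/
def powMat {h n t : ℕ} (B : Matrix (Fin h) (Fin n) ℤ) (φ : Fin n → Fin t) (r : ℕ) :
    Matrix (Fin r × Fin h) (powIdx r n t φ) ℤ :=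
  Matrix.of fun k f => B k.2 (f.1 k.1)




/-! ### l1 norm -/

def l1 {ι : Type*} [Fintype ι] (v : ι → ℤ) : ℤ := ∑ i, |v i|

lemma l1_nonneg {ι : Type*} [Fintype ι] (v : ι → ℤ) : 0 ≤ l1 v :=
  Finset.sum_nonneg fun i _ => abs_nonneg _

lemma l1_eq_zero {ι : Type*} [Fintype ι] {v : ι → ℤ} (h : l1 v = 0) : v = 0 := by
  funext i
  have := (Finset.sum_eq_zero_iff_of_nonneg (fun i _ => abs_nonneg (v i))).1 h i (Finset.mem_univ i)
  simpa [abs_eq_zero] using this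

lemma l1_pos_of_ne {ι : Type*} [Fintype ι] {v : ι → ℤ} (h : v ≠ 0) : 0 < l1 v := by
  rcases lt_or_eq_of_le (l1_nonneg v) with h' | h'
  · exact h'
  · exact absurd (l1_eq_zero h'.symm) h

lemma posle_abs {ι : Type*} (v : ι → ℤ) (i : ι) : pos v i ≤ |v i| :=
  max_le (le_abs_self _) (abs_nonneg _)
lemma negle_abs {ι : Type*} (v : ι → ℤ) (i : ι) : neg v i ≤ |v i| :=
  max_le (neg_le_abs _) (abs_nonneg _)

lemma deg_le_l1 {ι : Type*} [Fintype ι] (v : ι → ℤ) : deg v ≤ l1 v := by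
  refine max_le ?_ ?_ <;> exact Finset.sum_le_sum fun i _ => by
    first | exact posle_abs v i | exact negle_abs v i

lemma deg_sub_le {ι : Type*} [Fintype ι] (P Q : ι → ℤ) (hP : 0 ≤ P) (hQ : 0 ≤ Q) :
    deg (P - Q) ≤ max (∑ i, P i) (∑ i, Q i) := by
  refine max_le_max (Finset.sum_le_sum fun i _ => ?_) (Finset.sum_le_sum fun i _ => ?_) <;>
  · have h1 := hP i
    have h2 := hQ i
    simp only [Pi.zero_apply] at h1 h2
    simp only [pos, neg, Pi.sub_apply, neg_sub]
    omega

/-! ### Sign-compatible order -/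

def cle (x y : ℤ) : Prop := (0 ≤ x ∧ x ≤ y) ∨ (y ≤ x ∧ x ≤ 0)

def sle {ι : Type*} (u v : ι → ℤ) : Prop := ∀ i, cle (u i) (v i)

lemma cle_trans {x y z : ℤ} (h1 : cle x y) (h2 : cle y z) : cle x z := by
  rcases h1 with ⟨h1a, h1b⟩ | ⟨h1a, h1b⟩ <;> rcases h2 with ⟨h2a, h2b⟩ | ⟨h2a, h2b⟩ <;>
    [left; right; left; right] <;> constructor <;> omega

lemma cle_refl (x : ℤ) : cle x x := by unfold cle; omega

lemma cle_abs_le {x y : ℤ} (h : cle x y) : |x| ≤ |y| := by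
  rcases h with ⟨h1, h2⟩ | ⟨h1, h2⟩ <;> rcases abs_cases x with ⟨hx, _⟩ | ⟨hx, _⟩ <;>
    rcases abs_cases y with ⟨hy, _⟩ | ⟨hy, _⟩ <;> omega

lemma cle_abs_sub {x y : ℤ} (h : cle x y) : |y - x| = |y| - |x| := by
  rcases h with ⟨h1, h2⟩ | ⟨h1, h2⟩ <;> rcases abs_cases x with ⟨hx, _⟩ | ⟨hx, _⟩ <;>
    rcases abs_cases y with ⟨hy, _⟩ | ⟨hy, _⟩ <;> rcases abs_cases (y - x) with ⟨hyx, _⟩ | ⟨hyx, _⟩ <;>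
    omega

lemma cle_sub {x y : ℤ} (h : cle x y) : cle (y - x) y := by
  rcases h with ⟨h1, h2⟩ | ⟨h1, h2⟩ <;> [left; right] <;> constructor <;> omega

lemma cle_eq_of_abs {x y : ℤ} (h : cle x y) (habs : |y| ≤ |x|) : x = y := by
  rcases h with ⟨h1, h2⟩ | ⟨h1, h2⟩ <;> rcases abs_cases x with ⟨hx, _⟩ | ⟨hx, _⟩ <;>
    rcases abs_cases y with ⟨hy, _⟩ | ⟨hy, _⟩ <;> omega

lemma cle_toNat {x y : ℤ} :
    cle x y ↔ (x.toNat ≤ y.toNat ∧ (-x).toNat ≤ (-y).toNat) := by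
  unfold cle; omega

lemma sle_trans {ι : Type*} {u v w : ι → ℤ} (h1 : sle u v) (h2 : sle v w) : sle u w :=
  fun i => cle_trans (h1 i) (h2 i)

lemma sle_l1_le {ι : Type*} [Fintype ι] {u v : ι → ℤ} (h : sle u v) : l1 u ≤ l1 v :=
  Finset.sum_le_sum fun i _ => cle_abs_le (h i)

lemma sle_l1_sub {ι : Type*} [Fintype ι] {u v : ι → ℤ} (h : sle u v) :
    l1 (v - u) = l1 v - l1 u := by
  unfold l1
  rw [← Finset.sum_sub_distrib]
  exact Finset.sum_congr rfl fun i _ => cle_abs_sub (h i)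

lemma sle_sub {ι : Type*} {u v : ι → ℤ} (h : sle u v) : sle (v - u) v :=
  fun i => cle_sub (h i)

lemma sle_eq_of_l1 {ι : Type*} [Fintype ι] {u v : ι → ℤ} (h : sle u v)
    (hl : l1 v ≤ l1 u) : u = v := by
  funext i
  refine cle_eq_of_abs (h i) ?_
  by_contra hc
  push_neg at hc
  have h1 : ∀ j, |u j| ≤ |v j| := fun j => cle_abs_le (h j)
  have : l1 u < l1 v := by
    unfold l1
    exact Finset.sum_lt_sum (fun j _ => h1 j) ⟨i, Finset.mem_univ i, hc⟩
  omega

/-! ### Minimal elements and Dickson's lemma -/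

def minimalIn {ι : Type*} (K : Set (ι → ℤ)) (m : ι → ℤ) : Prop :=
  m ∈ K ∧ ∀ m' ∈ K, sle m' m → m' = m

lemma exists_minimal {ι : Type*} [Fintype ι] (K : Set (ι → ℤ)) :
    ∀ m ∈ K, ∃ m₀, minimalIn K m₀ ∧ sle m₀ m := by
  have H : ∀ N : ℕ, ∀ m ∈ K, (l1 m).toNat ≤ N → ∃ m₀, minimalIn K m₀ ∧ sle m₀ m := by
    intro N
    induction N with
    | zero =>
      intro m hm hl
      refine ⟨m, ⟨hm, fun m' hm' hsle => ?_⟩, fun i => cle_refl _⟩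
      · have h1 : l1 m = 0 := le_antisymm (by omega) (l1_nonneg m)
        have h2 : l1 m' = 0 := le_antisymm (by rw [← h1]; exact sle_l1_le hsle) (l1_nonneg m')
        rw [l1_eq_zero h2, l1_eq_zero h1]
    | succ N ih =>
      intro m hm hl
      by_cases hmin : ∀ m' ∈ K, sle m' m → m' = m
      · exact ⟨m, ⟨hm, hmin⟩, fun i => cle_refl _⟩
      · push_neg at hmin
        obtain ⟨m', hm', hsle, hne⟩ := hmin
        have hlt : l1 m' < l1 m := by
          rcases lt_or_eq_of_le (sle_l1_le hsle) with h' | h'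
          · exact h'
          · exact absurd (sle_eq_of_l1 hsle h'.ge) hne
        obtain ⟨m₀, hmin₀, hsle₀⟩ := ih m' hm' (by omega)
        exact ⟨m₀, hmin₀, sle_trans hsle₀ hsle⟩
  intro m hm
  exact H (l1 m).toNat m hm le_rfl

lemma minimal_finite {ι : Type*} [Fintype ι] (K : Set (ι → ℤ)) :
    {m | minimalIn K m}.Finite := by
  classical
  set e : (ι → ℤ) → (ι ⊕ ι → ℕ) := fun m j =>
    Sum.elim (fun i => (m i).toNat) (fun i => (-(m i)).toNat) j with he
  have hinj : Function.Injective e := by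
    intro x y hxy
    funext i
    have h1 := congrFun hxy (Sum.inl i)
    have h2 := congrFun hxy (Sum.inr i)
    simp only [e, Sum.elim_inl, Sum.elim_inr] at h1 h2
    omega
  have hmono : ∀ x y : ι → ℤ, (e x ≤ e y) ↔ sle x y := by
    intro x y
    constructor
    · intro hle i
      have h1 := hle (Sum.inl i)
      have h2 := hle (Sum.inr i)
      simp only [e, Sum.elim_inl, Sum.elim_inr] at h1 h2
      rw [cle_toNat]
      exact ⟨h1, h2⟩
    · intro hs j
      rcases j with i | i <;>
      · have := (cle_toNat).1 (hs i)
        simp only [e, Sum.elim_inl, Sum.elim_inr]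
        omega
  have inst : ∀ i : ι ⊕ ι, IsWellOrder ((fun _ => ℕ) i) (· < ·) := fun _ => inferInstance
  have hpwo : (e '' {m | minimalIn K m}).IsPWO :=
    Set.isPWO_of_wellQuasiOrderedLE _
  have hanti : IsAntichain (· ≤ ·) (e '' {m | minimalIn K m}) := by
    rintro _ ⟨x, hx, rfl⟩ _ ⟨y, hy, rfl⟩ hne hle
    exact hne (by rw [hy.2 x hx.1 ((hmono x y).1 hle)])
  have := hanti.finite_of_partiallyWellOrderedOn hpwo
  exact Set.Finite.of_finite_image this (hinj.injOn)

lemma minimal_l1_bdd {ι : Type*} [Fintype ι] (K : Set (ι → ℤ)) :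
    ∃ D : ℤ, 0 ≤ D ∧ ∀ m, minimalIn K m → l1 m ≤ D := by
  obtain ⟨D, hD⟩ := ((minimal_finite K).image l1).bddAbove
  refine ⟨max D 0, le_max_right _ _, fun m hm => ?_⟩
  exact le_trans (hD (Set.mem_image_of_mem l1 hm)) (le_max_left _ _)



/-! ### marg lemmas -/

section Marg
variable {n t : ℕ} (φ : Fin n → Fin t)

lemma marg_zero : marg φ 0 = 0 := by
  funext a; simp [marg]

lemma marg_add (u v : Fin n → ℤ) : marg φ (u + v) = marg φ u + marg φ v := by
  funext a
  simp only [marg, Pi.add_apply, ← Finset.sum_add_distrib]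
  exact Finset.sum_congr rfl fun i _ => by split <;> simp

lemma marg_sub (u v : Fin n → ℤ) : marg φ (u - v) = marg φ u - marg φ v := by
  funext a
  simp only [marg, Pi.sub_apply, ← Finset.sum_sub_distrib]
  exact Finset.sum_congr rfl fun i _ => by split <;> simp

lemma marg_nonneg {v : Fin n → ℤ} (hv : 0 ≤ v) : 0 ≤ marg φ v := by
  intro a
  simp only [Pi.zero_apply, marg]
  refine Finset.sum_nonneg fun i _ => ?_
  have := hv i
  simp only [Pi.zero_apply] at this
  split <;> omega

lemma marg_mono {u v : Fin n → ℤ} (huv : u ≤ v) : marg φ u ≤ marg φ v := by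
  intro a
  refine Finset.sum_le_sum fun i _ => ?_
  have := huv i
  by_cases hc : φ i = a
  · simpa [hc] using this
  · simp [hc]

lemma marg_single (i : Fin n) (c : ℤ) : marg φ (Pi.single i c) = Pi.single (φ i) c := by
  funext a
  have : ∀ j : Fin n, ((if φ j = a then (Pi.single i c : Fin n → ℤ) j else 0) : ℤ)
      = (if j = i then (if φ i = a then c else 0) else 0) := by
    intro j
    by_cases h2 : j = i
    · subst h2; simp [Pi.single_apply]
    · simp [h2, Pi.single_apply]
  rw [marg, Finset.sum_congr rfl fun j _ => this j, Finset.sum_ite_eq' Finset.univ i]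
  simp [Pi.single_apply, eq_comm]

lemma sum_marg (v : Fin n → ℤ) : ∑ a, marg φ v a = ∑ i, v i := by
  simp only [marg]
  rw [Finset.sum_comm]
  exact Finset.sum_congr rfl fun i _ => by rw [Finset.sum_ite_eq Finset.univ (φ i)]; simp

lemma apply_le_marg {v : Fin n → ℤ} (hv : 0 ≤ v) (i : Fin n) : v i ≤ marg φ v (φ i) := by
  have h := Finset.single_le_sum (f := fun j => if φ j = φ i then v j else 0)
    (fun j _ => by
      show (0:ℤ) ≤ if φ j = φ i then v j else 0
      have := hv j
      simp only [Pi.zero_apply] at this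
      split <;> omega)
    (Finset.mem_univ i)
  simpa [marg] using h

lemma marg_le_sum {v : Fin n → ℤ} (hv : 0 ≤ v) (a : Fin t) : marg φ v a ≤ ∑ i, v i := by
  refine Finset.sum_le_sum fun i _ => ?_
  have := hv i
  simp only [Pi.zero_apply] at this
  split <;> omega

lemma marg_pos_wit {v : Fin n → ℤ} (hv : 0 ≤ v) {a : Fin t} (h : 0 < marg φ v a) :
    ∃ i, φ i = a ∧ 0 < v i := by
  by_contra hc
  push_neg at hc
  have : marg φ v a ≤ 0 := Finset.sum_nonpos fun i _ => by
    have h1 := hv i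
    simp only [Pi.zero_apply] at h1
    by_cases h2 : φ i = a
    · have := hc i h2; simp [h2]; omega
    · simp [h2]
  omega

lemma sum_pos_wit {t' : ℕ} {q : Fin t' → ℤ} (hq : 0 ≤ q) (h : 0 < ∑ a, q a) :
    ∃ a, 0 < q a := by
  by_contra hc
  push_neg at hc
  have : ∑ a, q a ≤ 0 := Finset.sum_nonpos fun a _ => hc a
  omega

end Marg

/-! ### Margins of tables on `powIdx` -/

section Tables
variable {h n t r : ℕ} {B : Matrix (Fin h) (Fin n) ℤ} (φ : Fin n → Fin t)

def umar (w : powIdx r n t φ → ℤ) (k : Fin r) : Fin n → ℤ :=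
  fun i => ∑ f, if f.1 k = i then w f else 0

lemma umar_add (w x : powIdx r n t φ → ℤ) (k : Fin r) :
    umar φ (w + x) k = umar φ w k + umar φ x k := by
  funext i
  simp only [umar, Pi.add_apply, ← Finset.sum_add_distrib]
  exact Finset.sum_congr rfl fun f _ => by split <;> simp

lemma umar_sub (w x : powIdx r n t φ → ℤ) (k : Fin r) :
    umar φ (w - x) k = umar φ w k - umar φ x k := by
  funext i
  simp only [umar, Pi.sub_apply, ← Finset.sum_sub_distrib]
  exact Finset.sum_congr rfl fun f _ => by split <;> simp

lemma umar_zero (k : Fin r) : umar φ (0 : powIdx r n t φ → ℤ) k = 0 := by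
  funext i; simp [umar]

lemma umar_nonneg {w : powIdx r n t φ → ℤ} (hw : 0 ≤ w) (k : Fin r) : 0 ≤ umar φ w k := by
  intro i
  simp only [Pi.zero_apply, umar]
  refine Finset.sum_nonneg fun f _ => ?_
  have := hw f
  simp only [Pi.zero_apply] at this
  split <;> omega

lemma umar_single (f : powIdx r n t φ) (c : ℤ) (k : Fin r) :
    umar φ (Pi.single f c) k = Pi.single (f.1 k) c := by
  classical
  funext i
  have key : ∀ g : powIdx r n t φ, ((if g.1 k = i then (Pi.single f c : powIdx r n t φ → ℤ) g else 0) : ℤ)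
      = (if g = f then (if f.1 k = i then c else 0) else 0) := by
    intro g
    by_cases h2 : g = f
    · subst h2; simp [Pi.single_apply]
    · simp [h2, Pi.single_apply]
  rw [umar]
  rw [Finset.sum_congr rfl fun g _ => key g, Finset.sum_ite_eq' Finset.univ f]
  simp [Pi.single_apply, eq_comm]

lemma mulVec_umar (w : powIdx r n t φ → ℤ) (k : Fin r) (j : Fin h) :
    (powMat B φ r).mulVec w (k, j) = B.mulVec (umar φ w k) j := by
  have lhs : (powMat B φ r).mulVec w (k, j) = ∑ f, B j (f.1 k) * w f := by
    simp [Matrix.mulVec, dotProduct, powMat]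
  have rhs : B.mulVec (umar φ w k) j = ∑ i, ∑ f : powIdx r n t φ,
      (if f.1 k = i then B j i * w f else 0) := by
    simp [Matrix.mulVec, dotProduct, umar, Finset.mul_sum, mul_ite]
  rw [lhs, rhs, Finset.sum_comm]
  refine Finset.sum_congr rfl fun f _ => ?_
  rw [Finset.sum_ite_eq Finset.univ (f.1 k) (fun i => B j i * w f)]
  simp

lemma sum_umar (w : powIdx r n t φ → ℤ) (k : Fin r) :
    ∑ i, umar φ w k i = ∑ f, w f := by
  unfold umar
  rw [Finset.sum_comm]
  exact Finset.sum_congr rfl fun f _ => by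
    rw [Finset.sum_ite_eq Finset.univ (f.1 k)]; simp

/-- grade of a cell -/
def gr (hr : 0 < r) (f : powIdx r n t φ) : Fin t := φ (f.1 ⟨0, hr⟩)

lemma gr_spec (hr : 0 < r) (f : powIdx r n t φ) (k : Fin r) : φ (f.1 k) = gr φ hr f := by
  obtain ⟨a, ha⟩ := f.2
  rw [gr, ha, ha]

/-- common grade margin -/
def lam (hr : 0 < r) (w : powIdx r n t φ → ℤ) : Fin t → ℤ :=
  fun a => ∑ f, if gr φ hr f = a then w f else 0

lemma marg_umar (hr : 0 < r) (w : powIdx r n t φ → ℤ) (k : Fin r) :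
    marg φ (umar φ w k) = lam φ hr w := by
  funext a
  have key : ∀ f : powIdx r n t φ, ∀ i,
      (if φ i = a then (if f.1 k = i then w f else 0) else 0)
      = (if f.1 k = i then (if gr φ hr f = a then w f else 0) else 0) := by
    intro f i
    by_cases h2 : f.1 k = i
    · subst h2
      rw [gr_spec φ hr f k]
      simp
    · simp [h2]
  simp only [marg, umar, lam]
  calc (∑ i, if φ i = a then (∑ f : powIdx r n t φ, if f.1 k = i then w f else 0) else 0)
      = ∑ i, ∑ f : powIdx r n t φ,
          (if φ i = a then (if f.1 k = i then w f else 0) else 0) := by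
        refine Finset.sum_congr rfl fun i _ => ?_
        split <;> simp
    _ = ∑ i, ∑ f : powIdx r n t φ,
          (if f.1 k = i then (if gr φ hr f = a then w f else 0) else 0) :=
        Finset.sum_congr rfl fun i _ => Finset.sum_congr rfl fun f _ => key f i
    _ = ∑ f : powIdx r n t φ, ∑ i,
          (if f.1 k = i then (if gr φ hr f = a then w f else 0) else 0) := Finset.sum_comm
    _ = ∑ f : powIdx r n t φ, (if gr φ hr f = a then w f else 0) := by
        refine Finset.sum_congr rfl fun f _ => ?_
        rw [Finset.sum_ite_eq Finset.univ (f.1 k)]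
        simp


lemma coupling_exists (hr : 0 < r) :
    ∀ N : ℕ, ∀ (ρ : Fin r → Fin n → ℤ) (q : Fin t → ℤ),
      (∀ k, 0 ≤ ρ k) → (∀ k, marg φ (ρ k) = q) → (∑ a, q a).toNat ≤ N →
      ∃ W : powIdx r n t φ → ℤ, 0 ≤ W ∧ ∀ k, umar φ W k = ρ k := by
  intro N
  induction N with
  | zero =>
    intro ρ q hρ hq hN
    have hq0 : 0 ≤ q := by rw [← hq ⟨0, hr⟩]; exact marg_nonneg φ (hρ _)
    have hsum : ∑ a, q a = 0 :=
      le_antisymm (by omega) (Finset.sum_nonneg fun a _ => hq0 a)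
    have hqz : ∀ a, q a = 0 := fun a =>
      (Finset.sum_eq_zero_iff_of_nonneg (fun a _ => hq0 a)).1 hsum a (Finset.mem_univ a)
    have hρz : ∀ k, ρ k = 0 := by
      intro k; funext i
      have h1 := apply_le_marg φ (hρ k) i
      rw [hq k] at h1
      have h2 := hρ k i
      have h3 := hqz (φ i)
      simp only [Pi.zero_apply] at h2 ⊢
      omega
    exact ⟨0, le_refl _, fun k => by rw [umar_zero, hρz k]⟩
  | succ N ih =>
    intro ρ q hρ hq hN
    have hq0 : 0 ≤ q := by rw [← hq ⟨0, hr⟩]; exact marg_nonneg φ (hρ _)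
    by_cases hz : ∑ a, q a ≤ 0
    · exact ih ρ q hρ hq (by omega)
    · push_neg at hz
      obtain ⟨a, ha⟩ := sum_pos_wit hq0 hz
      have hex : ∀ k, ∃ i, φ i = a ∧ 0 < ρ k i := fun k =>
        marg_pos_wit φ (hρ k) (by rw [hq k]; exact ha)
      choose idx hφidx hpos using hex
      have hρ'0 : ∀ k, 0 ≤ ρ k - Pi.single (idx k) 1 := by
        intro k i
        have h2 := hρ k i
        have h3 := hpos k
        simp only [Pi.zero_apply, Pi.sub_apply, Pi.single_apply] at h2 ⊢
        by_cases hik : i = idx k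
        · subst hik; simp; omega
        · simp [hik]; omega
      have hρ'm : ∀ k, marg φ (ρ k - Pi.single (idx k) 1) = q - Pi.single a 1 := by
        intro k
        rw [marg_sub, hq k, marg_single, hφidx k]
      have hsing : ∑ b, Pi.single a (1:ℤ) b = 1 := by
        simp [Pi.single_apply, Finset.sum_ite_eq]
      have hsum' : (∑ b, (q - Pi.single a 1 : Fin t → ℤ) b).toNat ≤ N := by
        have heq : ∑ b, (q - Pi.single a 1 : Fin t → ℤ) b = (∑ b, q b) - 1 := by
          simp only [Pi.sub_apply, Finset.sum_sub_distrib, hsing]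
        omega
      obtain ⟨W', hW'0, hW'm⟩ := ih _ (q - Pi.single a 1) hρ'0 hρ'm hsum'
      refine ⟨W' + Pi.single ⟨fun k => idx k, ⟨a, fun k => hφidx k⟩⟩ 1, ?_, ?_⟩
      · intro f
        have h1 := hW'0 f
        simp only [Pi.add_apply, Pi.zero_apply, Pi.single_apply] at h1 ⊢
        split <;> omega
      · intro k
        rw [umar_add, hW'm k, umar_single]
        funext i
        simp only [Pi.sub_apply, Pi.add_apply]
        omega
  
lemma sub_margin :
    ∀ N : ℕ, ∀ (v : Fin n → ℤ) (q : Fin t → ℤ),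
      0 ≤ v → 0 ≤ q → q ≤ marg φ v → (∑ a, q a).toNat ≤ N →
      ∃ z : Fin n → ℤ, 0 ≤ z ∧ z ≤ v ∧ marg φ z = q := by
  intro N
  induction N with
  | zero =>
    intro v q hv hq0 hq hN
    have hsum : ∑ a, q a = 0 :=
      le_antisymm (by omega) (Finset.sum_nonneg fun a _ => hq0 a)
    have hqz : q = 0 := by
      funext a
      exact (Finset.sum_eq_zero_iff_of_nonneg (fun a _ => hq0 a)).1 hsum a (Finset.mem_univ a)
    exact ⟨0, le_refl _, hv, by rw [marg_zero, hqz]⟩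
  | succ N ih =>
    intro v q hv hq0 hq hN
    by_cases hz : ∑ a, q a ≤ 0
    · exact ih v q hv hq0 hq (by omega)
    · push_neg at hz
      obtain ⟨a, ha⟩ := sum_pos_wit hq0 hz
      obtain ⟨i, hφi, hvi⟩ := marg_pos_wit φ hv (lt_of_lt_of_le ha (hq a))
      have hv' : 0 ≤ v - Pi.single i 1 := by
        intro j
        have h2 := hv j
        simp only [Pi.zero_apply, Pi.sub_apply, Pi.single_apply] at h2 ⊢
        by_cases hji : j = i
        · subst hji; simp; omega
        · simp [hji]; omega
      have hq0' : 0 ≤ q - Pi.single a 1 := by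
        intro b
        have h2 := hq0 b
        simp only [Pi.zero_apply, Pi.sub_apply, Pi.single_apply] at h2 ⊢
        by_cases hba : b = a
        · subst hba; simp; omega
        · simp [hba]; omega
      have hq' : q - Pi.single a 1 ≤ marg φ (v - Pi.single i 1) := by
        rw [marg_sub, marg_single, hφi]
        intro b
        have h9 : q b ≤ marg φ v b := hq b
        simp only [Pi.sub_apply]
        omega
      have hsing : ∑ b, Pi.single a (1:ℤ) b = 1 := by
        simp [Pi.single_apply, Finset.sum_ite_eq]
      have hsum' : (∑ b, (q - Pi.single a 1 : Fin t → ℤ) b).toNat ≤ N := by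
        have heq : ∑ b, (q - Pi.single a 1 : Fin t → ℤ) b = (∑ b, q b) - 1 := by
          simp only [Pi.sub_apply, Finset.sum_sub_distrib, hsing]
        omega
      obtain ⟨z', hz'0, hz'le, hz'm⟩ := ih _ _ hv' hq0' hq' hsum'
      refine ⟨z' + Pi.single i 1, ?_, ?_, ?_⟩
      · intro j
        have h1 := hz'0 j
        simp only [Pi.add_apply, Pi.zero_apply, Pi.single_apply] at h1 ⊢
        split <;> omega
      · intro j
        have h1 := hz'le j
        simp only [Pi.add_apply, Pi.sub_apply] at h1 ⊢
        omega
      · rw [marg_add, hz'm, marg_single, hφi]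
        funext b
        simp only [Pi.sub_apply, Pi.add_apply]
        omega

end Tables

/-! ### generic path lemmas -/

lemma mstep_symm {ι : Type*} (F M : Set (ι → ℤ)) : Symmetric (mstep F M) :=
  fun _ _ h => ⟨h.2.1, h.1, h.2.2.symm⟩

lemma rtg_symm {ι : Type*} {F M : Set (ι → ℤ)} {u v : ι → ℤ}
    (h : Relation.ReflTransGen (mstep F M) u v) :
    Relation.ReflTransGen (mstep F M) v u :=
  by haveI : Std.Symm (mstep F M) := ⟨fun _ _ h => mstep_symm F M h⟩; exact Std.Symm.symm _ _ h

lemma rtg_mono {ι : Type*} {F F' M : Set (ι → ℤ)} (hFF : F ⊆ F') {u v : ι → ℤ}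
    (h : Relation.ReflTransGen (mstep F M) u v) :
    Relation.ReflTransGen (mstep F' M) u v :=
  Relation.ReflTransGen.mono (fun _ _ hs => ⟨hFF hs.1, hFF hs.2.1, hs.2.2⟩) _ _ h

lemma sum_pos_wit' {ι : Type*} [Fintype ι] {q : ι → ℤ} (hq : 0 ≤ q) (h : 0 < ∑ a, q a) :
    ∃ a, 0 < q a := by
  by_contra hc
  push_neg at hc
  have : ∑ a, q a ≤ 0 := Finset.sum_nonpos fun a _ => hc a
  omega

lemma nn_sum_zero {ι : Type*} [Fintype ι] {q : ι → ℤ} (hq : 0 ≤ q) (h : ∑ a, q a ≤ 0) :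
    q = 0 := by
  funext a
  have hz : ∑ a, q a = 0 := le_antisymm h (Finset.sum_nonneg fun a _ => hq a)
  exact (Finset.sum_eq_zero_iff_of_nonneg (fun a _ => hq a)).1 hz a (Finset.mem_univ a)

lemma sum_single {ι : Type*} [Fintype ι] [DecidableEq ι] (y : ι) (c : ℤ) :
    ∑ x, Pi.single y c x = c := by
  simp [Pi.single_apply, Finset.sum_ite_eq' Finset.univ y]

lemma single_nonneg' {ι : Type*} [DecidableEq ι] (y : ι) :
    0 ≤ (Pi.single y 1 : ι → ℤ) := by
  intro x
  simp only [Pi.zero_apply, Pi.single_apply]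
  split <;> omega

/-! ### Part III : swap connectivity within a margin class -/

section Swap
variable {n t r : ℕ} {φ : Fin n → Fin t}

lemma apply_le_umar {w : powIdx r n t φ → ℤ} (hw : 0 ≤ w) (f : powIdx r n t φ) (k : Fin r) :
    w f ≤ umar φ w k (f.1 k) := by
  have h := Finset.single_le_sum (f := fun g : powIdx r n t φ => if g.1 k = f.1 k then w g else 0)
    (fun g _ => by
      show (0:ℤ) ≤ if g.1 k = f.1 k then w g else 0
      have h1 : (0:ℤ) ≤ w g := hw g
      split <;> omega)
    (Finset.mem_univ f)
  simpa [umar] using h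

lemma umar_pos_wit {w : powIdx r n t φ → ℤ} (hw : 0 ≤ w) {k : Fin r} {i : Fin n}
    (h : 0 < umar φ w k i) : ∃ g : powIdx r n t φ, g.1 k = i ∧ 0 < w g := by
  by_contra hc
  push_neg at hc
  have : umar φ w k i ≤ 0 := Finset.sum_nonpos fun g _ => by
    have h1 : (0:ℤ) ≤ w g := hw g
    by_cases h2 : g.1 k = i
    · have := hc g h2; simp [h2]; omega
    · simp [h2]
  omega

lemma apply_le_lam (hr : 0 < r) {w : powIdx r n t φ → ℤ} (hw : 0 ≤ w) (f : powIdx r n t φ) :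
    w f ≤ lam φ hr w (gr φ hr f) := by
  have h := Finset.single_le_sum
    (f := fun g : powIdx r n t φ => if gr φ hr g = gr φ hr f then w g else 0)
    (fun g _ => by
      show (0:ℤ) ≤ if gr φ hr g = gr φ hr f then w g else 0
      have h1 : (0:ℤ) ≤ w g := hw g
      split <;> omega)
    (Finset.mem_univ f)
  simpa [lam] using h

lemma lam_pos_wit (hr : 0 < r) {w : powIdx r n t φ → ℤ} (hw : 0 ≤ w) {a : Fin t}
    (h : 0 < lam φ hr w a) : ∃ g : powIdx r n t φ, gr φ hr g = a ∧ 0 < w g := by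
  by_contra hc
  push_neg at hc
  have : lam φ hr w a ≤ 0 := Finset.sum_nonpos fun g _ => by
    have h1 : (0:ℤ) ≤ w g := hw g
    by_cases h2 : gr φ hr g = a
    · have := hc g h2; simp [h2]; omega
    · simp [h2]
  omega

lemma swap_connect (hr : 0 < r) (M : Set (powIdx r n t φ → ℤ))
    (hM : ∀ v : powIdx r n t φ → ℤ, (∀ k, umar φ v k = 0) → deg v ≤ 2 → v ∈ M) :
    ∀ N : ℕ, ∀ (u : Fin r → Fin n → ℤ) (w w' : powIdx r n t φ → ℤ),
      0 ≤ w → 0 ≤ w' → (∀ k, umar φ w k = u k) → (∀ k, umar φ w' k = u k) →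
      (∑ f, w f).toNat ≤ N →
      Relation.ReflTransGen (mstep {x | 0 ≤ x ∧ ∀ k, umar φ x k = u k} M) w w' := by
  intro N
  induction N with
  | zero =>
    intro u w w' hw0 hw'0 hwm hw'm hN
    have hsw' : ∑ f, w' f = ∑ f, w f := by
      rw [← sum_umar φ w' ⟨0, hr⟩, ← sum_umar φ w ⟨0, hr⟩, hwm, hw'm]
    have hwz : w = 0 := nn_sum_zero hw0 (by omega)
    have hw'z : w' = 0 := nn_sum_zero hw'0 (by omega)
    rw [hwz, hw'z]
  | succ N ih =>
    intro u w w' hw0 hw'0 hwm hw'm hN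
    by_cases hz : ∑ f, w f ≤ 0
    · exact ih u w w' hw0 hw'0 hwm hw'm (by omega)
    push_neg at hz
    obtain ⟨f₀, hf₀⟩ := sum_pos_wit' hw0 hz
    -- inner claim : from any table in the class with mass at a cell of the same grade as f₀,
    -- we can reach a table with mass at f₀ using swap moves.
    have inner : ∀ d : ℕ, ∀ (w' : powIdx r n t φ → ℤ) (g : powIdx r n t φ),
        0 ≤ w' → (∀ k, umar φ w' k = u k) → 0 < w' g → gr φ hr g = gr φ hr f₀ →
        (Finset.univ.filter (fun k => g.1 k ≠ f₀.1 k)).card ≤ d →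
        ∃ w'', (0 ≤ w'' ∧ (∀ k, umar φ w'' k = u k)) ∧ 0 < w'' f₀ ∧
          Relation.ReflTransGen (mstep {x | 0 ≤ x ∧ ∀ k, umar φ x k = u k} M) w' w'' := by
      intro d
      induction d with
      | zero =>
        intro w' g hw'0 hw'm hg hgr hcard
        have hgf : g = f₀ := by
          have hempty : (Finset.univ.filter (fun k => g.1 k ≠ f₀.1 k)) = ∅ :=
            Finset.card_eq_zero.1 (le_antisymm hcard (Nat.zero_le _))
          refine Subtype.ext (funext fun k => ?_)
          by_contra hk
          exact absurd (Finset.mem_filter.2 ⟨Finset.mem_univ k, hk⟩) (by rw [hempty]; simp)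
        subst hgf
        exact ⟨w', ⟨hw'0, hw'm⟩, hg, Relation.ReflTransGen.refl⟩
      | succ d ihd =>
        intro w' g hw'0 hw'm hg hgr hcard
        by_cases hgf : g = f₀
        · subst hgf
          exact ⟨w', ⟨hw'0, hw'm⟩, hg, Relation.ReflTransGen.refl⟩
        have hk₀ : ∃ k₀, g.1 k₀ ≠ f₀.1 k₀ := by
          by_contra hc
          push_neg at hc
          exact hgf (Subtype.ext (funext hc))
        obtain ⟨k₀, hk₀⟩ := hk₀
        -- find a cell e with mass agreeing with f₀ at k₀
        have hupos : 0 < umar φ w' k₀ (f₀.1 k₀) := by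
          rw [hw'm k₀, ← hwm k₀]
          exact lt_of_lt_of_le hf₀ (apply_le_umar hw0 f₀ k₀)
        obtain ⟨e, hek₀, hwe⟩ := umar_pos_wit hw'0 hupos
        have hne : e ≠ g := by
          intro hc
          rw [hc] at hek₀
          exact hk₀ hek₀
        have hgre : gr φ hr e = gr φ hr f₀ := by
          rw [← gr_spec φ hr e k₀, hek₀, gr_spec φ hr f₀ k₀]
        -- the swapped cells
        have hg'mem : ∀ k, φ (Function.update g.1 k₀ (f₀.1 k₀) k) = gr φ hr g := by
          intro k
          rcases eq_or_ne k k₀ with rfl | hk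
          · rw [Function.update_self, gr_spec φ hr f₀ k, hgr]
          · rw [Function.update_of_ne hk]
            exact gr_spec φ hr g k
        have he'mem : ∀ k, φ (Function.update e.1 k₀ (g.1 k₀) k) = gr φ hr e := by
          intro k
          rcases eq_or_ne k k₀ with rfl | hk
          · rw [Function.update_self, gr_spec φ hr g k, hgr, hgre]
          · rw [Function.update_of_ne hk]
            exact gr_spec φ hr e k
        set g' : powIdx r n t φ :=
          ⟨Function.update g.1 k₀ (f₀.1 k₀), ⟨gr φ hr g, hg'mem⟩⟩ with hg'def
        set e' : powIdx r n t φ :=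
          ⟨Function.update e.1 k₀ (g.1 k₀), ⟨gr φ hr e, he'mem⟩⟩ with he'def
        have hg'k₀ : g'.1 k₀ = f₀.1 k₀ := Function.update_self _ _ _
        have he'k₀ : e'.1 k₀ = g.1 k₀ := Function.update_self _ _ _
        have hg'k : ∀ k, k ≠ k₀ → g'.1 k = g.1 k := fun k hk => Function.update_of_ne hk _ _
        have he'k : ∀ k, k ≠ k₀ → e'.1 k = e.1 k := fun k hk => Function.update_of_ne hk _ _
        have hg'g : g' ≠ g := by
          intro hc
          apply hk₀
          rw [← hg'k₀, hc]
        set v : powIdx r n t φ → ℤ :=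
          (Pi.single g' 1 + Pi.single e' 1) - (Pi.single g 1 + Pi.single e 1) with hvdef
        have hval : ∀ x, v x = ((if x = g' then 1 else 0) + (if x = e' then 1 else 0))
            - ((if x = g then 1 else 0) + (if x = e then 1 else 0)) := by
          intro x
          simp [hvdef, Pi.single_apply]
        have humv : ∀ k, umar φ v k = 0 := by
          intro k
          rw [hvdef, umar_sub, umar_add, umar_add, umar_single, umar_single, umar_single,
            umar_single]
          rcases eq_or_ne k k₀ with rfl | hk
          · rw [hg'k₀, he'k₀, hek₀]
            abel
          · rw [hg'k k hk, he'k k hk]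
            abel
        have hdegv : deg v ≤ 2 := by
          have h1 := deg_sub_le (Pi.single g' 1 + Pi.single e' 1) (Pi.single g 1 + Pi.single e 1)
            (by intro x; have := single_nonneg' g' x; have := single_nonneg' e' x
                simp only [Pi.add_apply, Pi.zero_apply] at *; omega)
            (by intro x; have := single_nonneg' g x; have := single_nonneg' e x
                simp only [Pi.add_apply, Pi.zero_apply] at *; omega)
          rw [hvdef]
          refine le_trans h1 ?_
          have hs1 : ∑ x, (Pi.single g' 1 + Pi.single e' 1 : powIdx r n t φ → ℤ) x = 2 := by
            simp only [Pi.add_apply, Finset.sum_add_distrib, sum_single]; norm_num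
          have hs2 : ∑ x, (Pi.single g 1 + Pi.single e 1 : powIdx r n t φ → ℤ) x = 2 := by
            simp only [Pi.add_apply, Finset.sum_add_distrib, sum_single]; norm_num
          omega
        set w'' : powIdx r n t φ → ℤ := w' + v with hw''def
        have hw''0 : 0 ≤ w'' := by
          intro x
          have hx : (0:ℤ) ≤ w' x := hw'0 x
          show (0:ℤ) ≤ w' x + v x
          rw [hval x]
          by_cases h1 : x = g
          · have hxg' : x ≠ g' := by rw [h1]; exact fun hc => hg'g hc.symm
            have hxe : x ≠ e := by rw [h1]; exact fun hc => hne hc.symm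
            have hxw : (0:ℤ) < w' x := by rw [h1]; exact hg
            simp only [if_pos h1, if_neg hxg', if_neg hxe]
            split <;> omega
          · by_cases h2 : x = e
            · have hxw : (0:ℤ) < w' x := by rw [h2]; exact hwe
              simp only [if_pos h2, if_neg h1]
              split <;> split <;> omega
            · simp only [if_neg h1, if_neg h2]
              split <;> split <;> omega
        have hw''m : ∀ k, umar φ w'' k = u k := by
          intro k
          rw [hw''def, umar_add, humv k, hw'm k]
          simp
        have hstep : mstep {x | 0 ≤ x ∧ ∀ k, umar φ x k = u k} M w' w'' := by
          refine ⟨⟨hw'0, hw'm⟩, ⟨hw''0, hw''m⟩, Or.inl ?_⟩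
          have : w'' - w' = v := by rw [hw''def]; abel
          rw [this]
          exact hM v humv hdegv
        have hw''g' : 0 < w'' g' := by
          show (0:ℤ) < w' g' + v g'
          rw [hval g']
          by_cases h2 : g' = e
          · have h5 : (0:ℤ) < w' g' := by rw [h2]; exact hwe
            simp only [if_pos rfl, if_neg hg'g, if_pos h2, if_true]
            split <;> omega
          · have h5 : (0:ℤ) ≤ w' g' := hw'0 g'
            simp only [if_pos rfl, if_neg hg'g, if_neg h2, if_true]
            split <;> omega
        have hcard' : (Finset.univ.filter (fun k => g'.1 k ≠ f₀.1 k)).card ≤ d := by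
          have hsub : (Finset.univ.filter (fun k => g'.1 k ≠ f₀.1 k)) ⊆
              (Finset.univ.filter (fun k => g.1 k ≠ f₀.1 k)).erase k₀ := by
            intro k hk
            rw [Finset.mem_filter] at hk
            have hkk₀ : k ≠ k₀ := by
              intro hc
              subst hc
              exact hk.2 hg'k₀
            refine Finset.mem_erase.2 ⟨hkk₀, Finset.mem_filter.2 ⟨Finset.mem_univ k, ?_⟩⟩
            rw [← hg'k k hkk₀]
            exact hk.2
          have hmem : k₀ ∈ Finset.univ.filter (fun k => g.1 k ≠ f₀.1 k) :=
            Finset.mem_filter.2 ⟨Finset.mem_univ k₀, hk₀⟩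
          have h6 := Finset.card_le_card hsub
          rw [Finset.card_erase_of_mem hmem] at h6
          have h7 := Finset.card_pos.2 ⟨k₀, hmem⟩
          omega
        have hgrg' : gr φ hr g' = gr φ hr f₀ := by
          rw [← gr_spec φ hr g' k₀, hg'k₀, gr_spec φ hr f₀ k₀]
        obtain ⟨w''', hcls, hpos''', hpath⟩ := ihd w'' g' hw''0 hw''m hw''g' hgrg' hcard'
        exact ⟨w''', hcls, hpos''', Relation.ReflTransGen.trans
          (Relation.ReflTransGen.single hstep) hpath⟩
    -- find a cell of grade `gr f₀` with positive w'-mass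
    have hlam : 0 < lam φ hr w' (gr φ hr f₀) := by
      have h1 : lam φ hr w' = lam φ hr w := by
        rw [← marg_umar φ hr w' ⟨0, hr⟩, ← marg_umar φ hr w ⟨0, hr⟩, hw'm, hwm]
      rw [h1]
      exact lt_of_lt_of_le hf₀ (apply_le_lam hr hw0 f₀)
    obtain ⟨g, hgrg, hwg⟩ := lam_pos_wit hr hw'0 hlam
    obtain ⟨w'', ⟨hw''0, hw''m⟩, hw''f₀, hpath⟩ :=
      inner r w' g hw'0 hw'm hwg hgrg (le_trans (Finset.card_le_card (Finset.filter_subset _ _))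
        (by simp))
    -- peel off one unit at f₀ from both w and w''
    have hwp : 0 ≤ w - Pi.single f₀ 1 := by
      intro x
      have h1 : (0:ℤ) ≤ w x := hw0 x
      simp only [Pi.sub_apply, Pi.zero_apply, Pi.single_apply]
      rcases eq_or_ne x f₀ with rfl | hx
      · simp
        omega
      · simp [hx]
        omega
    have hw''p : 0 ≤ w'' - Pi.single f₀ 1 := by
      intro x
      have h1 : (0:ℤ) ≤ w'' x := hw''0 x
      simp only [Pi.sub_apply, Pi.zero_apply, Pi.single_apply]
      rcases eq_or_ne x f₀ with rfl | hx
      · simp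
        omega
      · simp [hx]
        omega
    have hwpm : ∀ k, umar φ (w - Pi.single f₀ 1) k = u k - Pi.single (f₀.1 k) 1 := by
      intro k
      rw [umar_sub, umar_single, hwm]
    have hw''pm : ∀ k, umar φ (w'' - Pi.single f₀ 1) k = u k - Pi.single (f₀.1 k) 1 := by
      intro k
      rw [umar_sub, umar_single, hw''m]
    have hsump : (∑ f, (w - Pi.single f₀ 1 : powIdx r n t φ → ℤ) f).toNat ≤ N := by
      have h1 : ∑ f, (w - Pi.single f₀ 1 : powIdx r n t φ → ℤ) f = (∑ f, w f) - 1 := by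
        simp only [Pi.sub_apply, Finset.sum_sub_distrib, sum_single]
      omega
    have hpath2 := ih (fun k => u k - Pi.single (f₀.1 k) 1) (w - Pi.single f₀ 1)
      (w'' - Pi.single f₀ 1) hwp hw''p hwpm hw''pm hsump
    -- lift the peeled path by adding the unit back
    have hlift := Relation.ReflTransGen.lift (fun x => x + Pi.single f₀ 1)
      (r := mstep {x | 0 ≤ x ∧ ∀ k, umar φ x k = (fun k => u k - Pi.single (f₀.1 k) 1) k} M)
      (p := mstep {x | 0 ≤ x ∧ ∀ k, umar φ x k = u k} M)
      (fun a b hab => by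
        obtain ⟨⟨ha0, ham⟩, ⟨hb0, hbm⟩, hmove⟩ := hab
        refine ⟨⟨?_, ?_⟩, ⟨?_, ?_⟩, ?_⟩
        · intro x
          have h1 : (0:ℤ) ≤ a x := ha0 x
          have h2 := single_nonneg' f₀ x
          simp only [Pi.add_apply, Pi.zero_apply] at h2 ⊢
          omega
        · intro k
          rw [umar_add, ham k, umar_single]
          simp
        · intro x
          have h1 : (0:ℤ) ≤ b x := hb0 x
          have h2 := single_nonneg' f₀ x
          simp only [Pi.add_apply, Pi.zero_apply] at h2 ⊢
          omega
        · intro k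
          rw [umar_add, hbm k, umar_single]
          simp
        · have h3 : b + Pi.single f₀ 1 - (a + Pi.single f₀ 1) = b - a := by abel
          have h4 : a + Pi.single f₀ 1 - (b + Pi.single f₀ 1) = a - b := by abel
          rw [h3, h4]
          exact hmove) _ _ hpath2
    have heq1 : w - Pi.single f₀ 1 + Pi.single f₀ 1 = w := by abel
    have heq2 : w'' - Pi.single f₀ 1 + Pi.single f₀ 1 = w'' := by abel
    exact Relation.ReflTransGen.trans (by simpa only [Function.onFun, heq1, heq2] using hlift) (rtg_symm hpath)

end Swap


/-! ### Part IV : lifting margin moves to bounded-degree table moves -/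

section Lift
variable {h n t r : ℕ} (B : Matrix (Fin h) (Fin n) ℤ) (φ : Fin n → Fin t)

lemma mem_fiber_iff (c : Fin r × Fin h → ℤ) (w : powIdx r n t φ → ℤ) :
    (powMat B φ r).mulVec w = c ↔ ∀ k j, B.mulVec (umar φ w k) j = c (k, j) := by
  constructor
  · intro hc k j
    rw [← mulVec_umar, hc]
  · intro hc
    funext x
    obtain ⟨k, j⟩ := x
    rw [mulVec_umar]
    exact hc k j

lemma pos_sub_neg {ι : Type*} (v : ι → ℤ) : pos v - neg v = v := by
  funext i
  simp only [Pi.sub_apply, pos, neg]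
  omega

lemma pos_nonneg' {ι : Type*} (v : ι → ℤ) : 0 ≤ pos v := fun i => le_max_right _ _
lemma neg_nonneg' {ι : Type*} (v : ι → ℤ) : 0 ≤ neg v := fun i => le_max_right _ _

lemma sum_neg_le_l1 {ι : Type*} [Fintype ι] (v : ι → ℤ) : ∑ i, neg v i ≤ l1 v :=
  Finset.sum_le_sum fun i _ => negle_abs v i

lemma sum_pos_le_l1 {ι : Type*} [Fintype ι] (v : ι → ℤ) : ∑ i, pos v i ≤ l1 v :=
  Finset.sum_le_sum fun i _ => posle_abs v i

lemma step_lift (hr : 0 < r) (c : Fin r × Fin h → ℤ) (C D DG : ℤ)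
    (M : Set (powIdx r n t φ → ℤ))
    (hM : ∀ v : powIdx r n t φ → ℤ, (powMat B φ r).mulVec v = 0 → deg v ≤ C → v ∈ M)
    (hC2 : 2 ≤ C) (hC : (t : ℤ) * D + DG ≤ C) (hD : 0 ≤ D)
    (w : powIdx r n t φ → ℤ)
    (hw : w ∈ {x : powIdx r n t φ → ℤ | 0 ≤ x ∧ (powMat B φ r).mulVec x = c})
    (m : Fin r → Fin n → ℤ) (g : Fin t → ℤ)
    (hker : ∀ k, B.mulVec (m k) = 0)
    (hmarg : ∀ k, marg φ (m k) = g)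
    (hl1 : ∀ k, l1 (m k) ≤ D)
    (hgl1 : l1 g ≤ DG)
    (hpos : ∀ k, 0 ≤ umar φ w k + m k) :
    ∃ w', (w' ∈ {x : powIdx r n t φ → ℤ | 0 ≤ x ∧ (powMat B φ r).mulVec x = c}) ∧
      (∀ k, umar φ w' k = umar φ w k + m k) ∧
      Relation.ReflTransGen
        (mstep {x : powIdx r n t φ → ℤ | 0 ≤ x ∧ (powMat B φ r).mulVec x = c} M) w w' := by
  obtain ⟨hw0, hwc⟩ := hw
  have hMswap : ∀ v : powIdx r n t φ → ℤ, (∀ k, umar φ v k = 0) → deg v ≤ 2 → v ∈ M := by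
    intro v hum hdeg
    refine hM v ?_ (le_trans hdeg hC2)
    rw [mem_fiber_iff]
    intro k j
    rw [hum k]
    simp [Matrix.mulVec_zero]
  have hu0 : ∀ k, 0 ≤ umar φ w k := fun k => umar_nonneg φ hw0 k
  have hBu : ∀ k j, B.mulVec (umar φ w k) j = c (k, j) := (mem_fiber_iff B φ c w).1 hwc
  have hmn0 : ∀ k, 0 ≤ neg (m k) := fun k => neg_nonneg' _
  have hmp0 : ∀ k, 0 ≤ pos (m k) := fun k => pos_nonneg' _
  have hmneg_le : ∀ k, neg (m k) ≤ umar φ w k := by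
    intro k i
    have h1 := hpos k i
    have h2 := hu0 k i
    simp only [Pi.add_apply, Pi.zero_apply] at h1 h2
    simp only [neg]
    omega
  set lamw : Fin t → ℤ := lam φ hr w with hlamw
  set p : Fin t → ℤ := fun a => min (lamw a) D with hp
  have hlamw0 : ∀ a, 0 ≤ lamw a := by
    intro a
    rw [hlamw, ← marg_umar φ hr w ⟨0, hr⟩]
    exact marg_nonneg φ (hu0 _) a
  have hple : ∀ a, p a ≤ lamw a := fun a => min_le_left _ _
  have hpD : ∀ a, p a ≤ D := fun a => min_le_right _ _
  have hmargneg : ∀ k a, marg φ (neg (m k)) a ≤ p a := by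
    intro k a
    refine le_min ?_ ?_
    · rw [hlamw, ← marg_umar φ hr w k]
      exact marg_mono φ (hmneg_le k) a
    · refine le_trans (marg_le_sum φ (hmn0 k) a) ?_
      exact le_trans (sum_neg_le_l1 (m k)) (hl1 k)
  have hp0 : ∀ a, (0:ℤ) ≤ p a := fun a => le_min (hlamw0 a) hD
  -- the paddings
  have hzex : ∀ k, ∃ z, 0 ≤ z ∧ z ≤ umar φ w k - neg (m k) ∧
      marg φ z = p - marg φ (neg (m k)) := by
    intro k
    refine sub_margin φ (∑ a, (p - marg φ (neg (m k)) : Fin t → ℤ) a).toNat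
      (umar φ w k - neg (m k)) (p - marg φ (neg (m k))) ?_ ?_ ?_ le_rfl
    · intro i
      have h1 := hmneg_le k i
      have h2 := hu0 k i
      simp only [Pi.sub_apply, Pi.zero_apply] at *
      omega
    · intro a
      have h1 := hmargneg k a
      simp only [Pi.sub_apply, Pi.zero_apply]
      omega
    · rw [marg_sub, marg_umar φ hr w k]
      intro a
      have h6 : p a ≤ lamw a := hple a
      have h7 := hmargneg k a
      simp only [Pi.sub_apply]
      rw [← hlamw]
      omega
  choose z hz0 hzle hzm using hzex
  -- the three couplings
  have hWneg : ∃ W : powIdx r n t φ → ℤ, 0 ≤ W ∧ ∀ k, umar φ W k = neg (m k) + z k := by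
    refine coupling_exists φ hr (∑ a, p a).toNat (fun k => neg (m k) + z k) p
      (fun k i => ?_) (fun k => ?_) le_rfl
    · have h1 := hmn0 k i
      have h2 := hz0 k i
      simp only [Pi.add_apply, Pi.zero_apply] at *
      omega
    · rw [marg_add, hzm k]
      funext a
      simp only [Pi.add_apply, Pi.sub_apply]
      omega
  have hWpos : ∃ W : powIdx r n t φ → ℤ, 0 ≤ W ∧ ∀ k, umar φ W k = pos (m k) + z k := by
    refine coupling_exists φ hr (∑ a, (p + g) a).toNat (fun k => pos (m k) + z k) (p + g)
      (fun k i => ?_) (fun k => ?_) le_rfl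
    · have h1 := hmp0 k i
      have h2 := hz0 k i
      simp only [Pi.add_apply, Pi.zero_apply] at *
      omega
    · rw [marg_add, hzm k]
      have hmm : marg φ (pos (m k)) - marg φ (neg (m k)) = g := by
        rw [← marg_sub, pos_sub_neg, hmarg k]
      funext a
      have h3 : marg φ (pos (m k)) a - marg φ (neg (m k)) a = g a := by
        rw [← hmm]; simp
      simp only [Pi.add_apply, Pi.sub_apply]
      omega
  have hWrest : ∃ W : powIdx r n t φ → ℤ, 0 ≤ W ∧
      ∀ k, umar φ W k = umar φ w k - (neg (m k) + z k) := by
    refine coupling_exists φ hr (∑ a, (lamw - p) a).toNat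
      (fun k => umar φ w k - (neg (m k) + z k)) (lamw - p)
      (fun k i => ?_) (fun k => ?_) le_rfl
    · have h1 := hzle k i
      simp only [Pi.add_apply, Pi.sub_apply, Pi.zero_apply] at *
      omega
    · rw [marg_sub, marg_add, hzm k, marg_umar φ hr w k, ← hlamw]
      funext a
      simp only [Pi.add_apply, Pi.sub_apply]
      omega
  obtain ⟨Wneg, hWneg0, hWnegm⟩ := hWneg
  obtain ⟨Wpos, hWpos0, hWposm⟩ := hWpos
  obtain ⟨Wrest, hWrest0, hWrestm⟩ := hWrest
  set w₁ : powIdx r n t φ → ℤ := Wrest + Wneg with hw₁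
  set w₂ : powIdx r n t φ → ℤ := Wrest + Wpos with hw₂
  have hw₁m : ∀ k, umar φ w₁ k = umar φ w k := by
    intro k
    rw [hw₁, umar_add, hWrestm k, hWnegm k]
    abel
  have hw₂m : ∀ k, umar φ w₂ k = umar φ w k + m k := by
    intro k
    rw [hw₂, umar_add, hWrestm k, hWposm k]
    funext i
    have h4 : pos (m k) i - neg (m k) i = m k i := by
      have h5 := congrFun (pos_sub_neg (m k)) i
      simpa using h5
    simp only [Pi.add_apply, Pi.sub_apply]
    omega
  have hw₁0 : 0 ≤ w₁ := by
    intro x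
    have h1 : (0:ℤ) ≤ Wrest x := hWrest0 x
    have h2 : (0:ℤ) ≤ Wneg x := hWneg0 x
    show (0:ℤ) ≤ Wrest x + Wneg x
    omega
  have hw₂0 : 0 ≤ w₂ := by
    intro x
    have h1 : (0:ℤ) ≤ Wrest x := hWrest0 x
    have h2 : (0:ℤ) ≤ Wpos x := hWpos0 x
    show (0:ℤ) ≤ Wrest x + Wpos x
    omega
  have hw₁F : w₁ ∈ {x : powIdx r n t φ → ℤ | 0 ≤ x ∧ (powMat B φ r).mulVec x = c} := by
    refine ⟨hw₁0, (mem_fiber_iff B φ c w₁).2 fun k j => ?_⟩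
    rw [hw₁m k]
    exact hBu k j
  have hw₂F : w₂ ∈ {x : powIdx r n t φ → ℤ | 0 ≤ x ∧ (powMat B φ r).mulVec x = c} := by
    refine ⟨hw₂0, (mem_fiber_iff B φ c w₂).2 fun k j => ?_⟩
    rw [hw₂m k, Matrix.mulVec_add]
    have h5 : B.mulVec (m k) j = 0 := by rw [hker k]; rfl
    simp only [Pi.add_apply, h5, add_zero]
    exact hBu k j
  -- from w to w₁ by swaps
  have hpath1 : Relation.ReflTransGen
      (mstep {x : powIdx r n t φ → ℤ | 0 ≤ x ∧ (powMat B φ r).mulVec x = c} M) w w₁ := by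
    have hsw := swap_connect hr M hMswap (∑ f, w f).toNat (fun k => umar φ w k) w w₁
      hw0 hw₁0 (fun k => rfl) hw₁m le_rfl
    refine rtg_mono ?_ hsw
    intro x hx
    refine ⟨hx.1, (mem_fiber_iff B φ c x).2 fun k j => ?_⟩
    rw [hx.2 k]
    exact hBu k j
  -- from w₁ to w₂ in one bounded-degree move
  have hdiff : w₂ - w₁ = Wpos - Wneg := by
    rw [hw₁, hw₂]
    abel
  have hdeg : deg (w₂ - w₁) ≤ C := by
    rw [hdiff]
    refine le_trans (deg_sub_le Wpos Wneg hWpos0 hWneg0) ?_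
    have hsump : ∑ a, p a ≤ (t : ℤ) * D := by
      refine le_trans (Finset.sum_le_sum fun a _ => hpD a) ?_
      simp [Finset.sum_const, Finset.card_univ]
    have hsumWneg : ∑ f, Wneg f = ∑ a, p a := by
      rw [← sum_umar φ Wneg ⟨0, hr⟩, hWnegm, ← sum_marg φ]
      refine Finset.sum_congr rfl fun a _ => ?_
      rw [marg_add]
      have h8 := congrFun (hzm ⟨0, hr⟩) a
      simp only [Pi.add_apply, Pi.sub_apply] at h8 ⊢
      omega
    have hsumWpos : ∑ f, Wpos f = ∑ a, p a + ∑ a, g a := by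
      rw [← sum_umar φ Wpos ⟨0, hr⟩, hWposm, ← sum_marg φ, ← Finset.sum_add_distrib]
      refine Finset.sum_congr rfl fun a _ => ?_
      rw [marg_add]
      have h8 := congrFun (hzm ⟨0, hr⟩) a
      have hmm : marg φ (pos (m ⟨0, hr⟩)) a - marg φ (neg (m ⟨0, hr⟩)) a = g a := by
        have h9 := congrFun (by rw [← marg_sub, pos_sub_neg, hmarg ⟨0, hr⟩] :
          marg φ (pos (m ⟨0, hr⟩)) - marg φ (neg (m ⟨0, hr⟩)) = g) a
        simpa using h9
      simp only [Pi.add_apply, Pi.sub_apply] at h8 ⊢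
      omega
    have hsumg : ∑ a, g a ≤ DG := by
      refine le_trans ?_ hgl1
      exact Finset.sum_le_sum fun a _ => le_abs_self _
    rw [hsumWneg, hsumWpos]
    have h10 := l1_nonneg g
    refine max_le (by omega) (by omega)
  have hstep : mstep {x : powIdx r n t φ → ℤ | 0 ≤ x ∧ (powMat B φ r).mulVec x = c} M w₁ w₂ := by
    refine ⟨hw₁F, hw₂F, Or.inl (hM _ ?_ hdeg)⟩
    rw [Matrix.mulVec_sub, hw₁F.2, hw₂F.2]
    simp
  exact ⟨w₂, hw₂F, hw₂m, Relation.ReflTransGen.trans hpath1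
    (Relation.ReflTransGen.single hstep)⟩

end Lift


/-! ### Part V : the main connectivity argument -/

section Main
variable {h n t r : ℕ}

lemma connect_sameLam (B : Matrix (Fin h) (Fin n) ℤ) (φ : Fin n → Fin t)
    (hr : 0 < r) (c : Fin r × Fin h → ℤ) (C D DG : ℤ)
    (hC2 : 2 ≤ C) (hC : (t : ℤ) * D + DG ≤ C) (hD : 0 ≤ D) (hDG : 0 ≤ DG)
    (hmin0 : ∀ m', minimalIn {m : Fin n → ℤ | B.mulVec m = 0 ∧ marg φ m = 0 ∧ m ≠ 0} m' →
      l1 m' ≤ D)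
    (M : Set (powIdx r n t φ → ℤ))
    (hM : ∀ v : powIdx r n t φ → ℤ, (powMat B φ r).mulVec v = 0 → deg v ≤ C → v ∈ M) :
    ∀ N : ℕ, ∀ w w' : powIdx r n t φ → ℤ,
      w ∈ {x : powIdx r n t φ → ℤ | 0 ≤ x ∧ (powMat B φ r).mulVec x = c} →
      w' ∈ {x : powIdx r n t φ → ℤ | 0 ≤ x ∧ (powMat B φ r).mulVec x = c} →
      lam φ hr w = lam φ hr w' →
      (∑ k, l1 (umar φ w' k - umar φ w k)).toNat ≤ N →
      Relation.ReflTransGen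
        (mstep {x : powIdx r n t φ → ℤ | 0 ≤ x ∧ (powMat B φ r).mulVec x = c} M) w w' := by
  have hMswap : ∀ v : powIdx r n t φ → ℤ, (∀ k, umar φ v k = 0) → deg v ≤ 2 → v ∈ M := by
    intro v hum hdeg
    refine hM v ?_ (le_trans hdeg hC2)
    rw [mem_fiber_iff]
    intro k j
    rw [hum k]
    simp [Matrix.mulVec_zero]
  intro N
  induction N with
  | zero =>
    intro w w' hw hw' hlam hN
    -- all margins agree, pure swap connectivity
    have hdz : ∀ k, umar φ w' k = umar φ w k := by
      intro k
      have hnn : ∀ k' : Fin r, k' ∈ Finset.univ →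
          (0:ℤ) ≤ l1 (umar φ w' k' - umar φ w k') := fun k' _ => l1_nonneg _
      have hsz : ∑ k', l1 (umar φ w' k' - umar φ w k') = 0 :=
        le_antisymm (by omega) (Finset.sum_nonneg hnn)
      have h1 := (Finset.sum_eq_zero_iff_of_nonneg hnn).1 hsz k (Finset.mem_univ k)
      have h2 := l1_eq_zero h1
      rwa [sub_eq_zero] at h2
    have hsw := swap_connect hr M hMswap (∑ f, w f).toNat (fun k => umar φ w k) w w'
      hw.1 hw'.1 (fun k => rfl) hdz le_rfl
    refine rtg_mono ?_ hsw
    intro x hx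
    refine ⟨hx.1, (mem_fiber_iff B φ c x).2 fun k j => ?_⟩
    rw [hx.2 k]
    exact (mem_fiber_iff B φ c w).1 hw.2 k j
  | succ N ih =>
    intro w w' hw hw' hlam hN
    by_cases hz : ∑ k, l1 (umar φ w' k - umar φ w k) ≤ 0
    · exact ih w w' hw hw' hlam (by omega)
    push_neg at hz
    obtain ⟨k₀, hk₀⟩ := sum_pos_wit'
      (q := fun k => l1 (umar φ w' k - umar φ w k)) (fun k => l1_nonneg _) hz
    have hd0 : umar φ w' k₀ - umar φ w k₀ ≠ 0 := by
      intro hc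
      rw [hc] at hk₀
      simp [l1] at hk₀
    have hdK : (umar φ w' k₀ - umar φ w k₀) ∈
        {m : Fin n → ℤ | B.mulVec m = 0 ∧ marg φ m = 0 ∧ m ≠ 0} := by
      refine ⟨?_, ?_, hd0⟩
      · rw [Matrix.mulVec_sub]
        funext j
        have h1 := (mem_fiber_iff B φ c w).1 hw.2 k₀ j
        have h2 := (mem_fiber_iff B φ c w').1 hw'.2 k₀ j
        simp only [Pi.sub_apply, h1, h2, Pi.zero_apply]
        omega
      · rw [marg_sub, marg_umar φ hr w' k₀, marg_umar φ hr w k₀, hlam]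
        simp
    obtain ⟨m₀, hm₀min, hm₀sle⟩ := exists_minimal _ _ hdK
    obtain ⟨hm₀ker, hm₀marg, hm₀ne⟩ := hm₀min.1
    have hl1m₀ : l1 m₀ ≤ D := hmin0 _ hm₀min
    have hl1m₀pos : 0 < l1 m₀ := l1_pos_of_ne hm₀ne
    have hl1zero : l1 (0 : Fin n → ℤ) = 0 := by simp [l1]
    have hl1zerot : l1 (0 : Fin t → ℤ) = 0 := by simp [l1]
    set mfam : Fin r → Fin n → ℤ := fun k => if k = k₀ then m₀ else 0 with hmfam
    have hmfk₀ : mfam k₀ = m₀ := if_pos rfl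
    have hmfne : ∀ k, k ≠ k₀ → mfam k = 0 := fun k hk => if_neg hk
    obtain ⟨w₂, hw₂F, hw₂m, hpath₂⟩ := step_lift B φ hr c C D DG M hM hC2 hC hD w hw
      mfam 0
      (by intro k
          by_cases hk : k = k₀
          · subst hk; rw [hmfk₀]; exact hm₀ker
          · rw [hmfne k hk]; exact Matrix.mulVec_zero B)
      (by intro k
          by_cases hk : k = k₀
          · subst hk; rw [hmfk₀]; exact hm₀marg
          · rw [hmfne k hk]; exact marg_zero φ)
      (by intro k
          by_cases hk : k = k₀
          · subst hk; rw [hmfk₀]; exact hl1m₀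
          · rw [hmfne k hk, hl1zero]; exact hD)
      (by rw [hl1zerot]; exact hDG)
      (by intro k
          by_cases hk : k = k₀
          · subst hk
            rw [hmfk₀]
            intro i
            have h1 : (0:ℤ) ≤ umar φ w k i := umar_nonneg φ hw.1 k i
            have h2 : (0:ℤ) ≤ umar φ w' k i := umar_nonneg φ hw'.1 k i
            simp only [Pi.add_apply, Pi.zero_apply]
            rcases hm₀sle i with ⟨h3, h4⟩ | ⟨h3, h4⟩
            · omega
            · simp only [Pi.sub_apply] at h3
              omega
          · rw [hmfne k hk]
            intro i
            have h1 : (0:ℤ) ≤ umar φ w k i := umar_nonneg φ hw.1 k i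
            simp only [Pi.add_apply, Pi.zero_apply]
            omega)
    have hmargmfam : ∀ k, marg φ (mfam k) = 0 := by
      intro k
      by_cases hk : k = k₀
      · subst hk; rw [hmfk₀]; exact hm₀marg
      · rw [hmfne k hk]; exact marg_zero φ
    have hlam₂ : lam φ hr w₂ = lam φ hr w := by
      rw [← marg_umar φ hr w₂ ⟨0, hr⟩, hw₂m, marg_add, hmargmfam, marg_umar φ hr w ⟨0, hr⟩]
      simp
    have hterm : ∀ k, l1 (umar φ w' k - umar φ w₂ k)
        = l1 (umar φ w' k - umar φ w k) - (if k = k₀ then l1 m₀ else 0) := by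
      intro k
      rw [hw₂m k]
      by_cases hk : k = k₀
      · subst hk
        rw [hmfk₀, if_pos rfl]
        have heq : umar φ w' k - (umar φ w k + m₀) = (umar φ w' k - umar φ w k) - m₀ := by
          abel
        rw [heq]
        exact sle_l1_sub hm₀sle
      · rw [hmfne k hk, if_neg hk]
        simp only [add_zero, sub_zero]
    have hmeas : (∑ k, l1 (umar φ w' k - umar φ w₂ k)).toNat ≤ N := by
      have h1 : ∑ k, l1 (umar φ w' k - umar φ w₂ k)
          = (∑ k, l1 (umar φ w' k - umar φ w k)) - l1 m₀ := by
        rw [Finset.sum_congr rfl fun k _ => hterm k, Finset.sum_sub_distrib,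
          Finset.sum_ite_eq' Finset.univ k₀]
        simp
      omega
    exact Relation.ReflTransGen.trans hpath₂
      (ih w₂ w' hw₂F hw' (by rw [hlam₂, hlam]) hmeas)

lemma connect_level (B : Matrix (Fin h) (Fin n) ℤ) (φ : Fin n → Fin t)
    (hr : 0 < r) (c : Fin r × Fin h → ℤ) (C D DG : ℤ) (g : Fin t → ℤ)
    (hC2 : 2 ≤ C) (hC : (t : ℤ) * D + DG ≤ C) (hD : 0 ≤ D) (hDG : 0 ≤ DG)
    (hmin0 : ∀ m', minimalIn {m : Fin n → ℤ | B.mulVec m = 0 ∧ marg φ m = 0 ∧ m ≠ 0} m' →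
      l1 m' ≤ D)
    (hminG : ∀ m', minimalIn {m : Fin n → ℤ | B.mulVec m = 0 ∧ marg φ m = g ∧ m ≠ 0} m' →
      l1 m' ≤ D)
    (hgl1 : l1 g ≤ DG)
    (M : Set (powIdx r n t φ → ℤ))
    (hM : ∀ v : powIdx r n t φ → ℤ, (powMat B φ r).mulVec v = 0 → deg v ≤ C → v ∈ M) :
    ∀ w w' : powIdx r n t φ → ℤ,
      w ∈ {x : powIdx r n t φ → ℤ | 0 ≤ x ∧ (powMat B φ r).mulVec x = c} →
      w' ∈ {x : powIdx r n t φ → ℤ | 0 ≤ x ∧ (powMat B φ r).mulVec x = c} →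
      lam φ hr w' = lam φ hr w + g →
      Relation.ReflTransGen
        (mstep {x : powIdx r n t φ → ℤ | 0 ≤ x ∧ (powMat B φ r).mulVec x = c} M) w w' := by
  intro w w' hw hw' hlam
  by_cases hg0 : g = 0
  · subst hg0
    refine connect_sameLam B φ hr c C D DG hC2 hC hD hDG hmin0 M hM _ w w' hw hw' ?_ le_rfl
    rw [hlam]
    simp
  -- the level-changing step
  have hdK : ∀ k, (umar φ w' k - umar φ w k) ∈
      {m : Fin n → ℤ | B.mulVec m = 0 ∧ marg φ m = g ∧ m ≠ 0} := by
    intro k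
    have hmargd : marg φ (umar φ w' k - umar φ w k) = g := by
      rw [marg_sub, marg_umar φ hr w' k, marg_umar φ hr w k, hlam]
      abel
    refine ⟨?_, hmargd, ?_⟩
    · rw [Matrix.mulVec_sub]
      funext j
      have h1 := (mem_fiber_iff B φ c w).1 hw.2 k j
      have h2 := (mem_fiber_iff B φ c w').1 hw'.2 k j
      simp only [Pi.sub_apply, h1, h2, Pi.zero_apply]
      omega
    · intro hc
      rw [hc, marg_zero] at hmargd
      exact hg0 hmargd.symm
  have hmex : ∀ k, ∃ m₀, minimalIn {m : Fin n → ℤ | B.mulVec m = 0 ∧ marg φ m = g ∧ m ≠ 0} m₀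
      ∧ sle m₀ (umar φ w' k - umar φ w k) :=
    fun k => exists_minimal _ _ (hdK k)
  choose mk hmkmin hmksle using hmex
  obtain ⟨w₂, hw₂F, hw₂m, hpath₂⟩ := step_lift B φ hr c C D DG M hM hC2 hC hD w hw mk g
    (fun k => (hmkmin k).1.1)
    (fun k => (hmkmin k).1.2.1)
    (fun k => hminG _ (hmkmin k))
    hgl1
    (by intro k i
        have h1 : (0:ℤ) ≤ umar φ w k i := umar_nonneg φ hw.1 k i
        have h2 : (0:ℤ) ≤ umar φ w' k i := umar_nonneg φ hw'.1 k i
        simp only [Pi.add_apply, Pi.zero_apply]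
        rcases hmksle k i with ⟨h3, h4⟩ | ⟨h3, h4⟩
        · omega
        · simp only [Pi.sub_apply] at h3
          omega)
  have hlam₂ : lam φ hr w₂ = lam φ hr w' := by
    rw [← marg_umar φ hr w₂ ⟨0, hr⟩, hw₂m, marg_add, marg_umar φ hr w ⟨0, hr⟩,
      (hmkmin ⟨0, hr⟩).1.2.1, hlam]
  exact Relation.ReflTransGen.trans hpath₂
    (connect_sameLam B φ hr c C D DG hC2 hC hD hDG hmin0 M hM _ w₂ w' hw₂F hw' hlam₂ le_rfl)

end Main


/-! ### The main theorem -/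


/-- Theorem 6.2: if there is a finite PFI Markov basis `𝒢` connecting
all finite intersections of projected fibers of `ℬ`, then the Markov degrees of all
toric fiber powers `×_𝒜^r ℬ` are uniformly bounded. -/
theorem stmt_18 (s t h n : ℕ)
    (A : Matrix (Fin s) (Fin t) ℤ) (B : Matrix (Fin h) (Fin n) ℤ)
    (φ : Fin n → Fin t) (hφ : Function.Surjective φ)
    (hgr : ∀ v, B.mulVec v = 0 → A.mulVec (marg φ v) = 0)
    (G : Set (Fin t → ℤ)) (hGfin : G.Finite)
    (hG : ∀ (r : ℕ), 0 < r → ∀ b : Fin r → (Fin h → ℤ),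
      (∀ i, ∃ w : Fin n → ℤ, 0 ≤ w ∧ B.mulVec w = b i) →
      connects G (⋂ i, marg φ '' {w | 0 ≤ w ∧ B.mulVec w = b i})) :
    ∃ C : ℤ, 0 < C ∧ ∀ r : ℕ, 0 < r →
      ∃ M : Set (powIdx r n t φ → ℤ),
        (∀ v ∈ M, (powMat B φ r).mulVec v = 0) ∧
        (∀ c : Fin r × Fin h → ℤ,
          connects M {w | 0 ≤ w ∧ (powMat B φ r).mulVec w = c}) ∧
        (∀ v ∈ M, deg v ≤ C) := by
  classical
  -- the relevant collection of level moves
  set 𝒢 : Set (Fin t → ℤ) := insert 0 (G ∪ (fun x => -x) '' G) with h𝒢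
  have h𝒢fin : 𝒢.Finite := ((hGfin.union (hGfin.image _)).insert 0)
  have h𝒢zero : (0 : Fin t → ℤ) ∈ 𝒢 := Set.mem_insert _ _
  -- a uniform bound on minimal coset elements
  have hminsfin : (⋃ g ∈ 𝒢,
      {m' | minimalIn {m : Fin n → ℤ | B.mulVec m = 0 ∧ marg φ m = g ∧ m ≠ 0} m'}).Finite :=
    h𝒢fin.biUnion (fun g _ => minimal_finite _)
  obtain ⟨D, hD0, hD⟩ : ∃ D : ℤ, 0 ≤ D ∧ ∀ g ∈ 𝒢, ∀ m',
      minimalIn {m : Fin n → ℤ | B.mulVec m = 0 ∧ marg φ m = g ∧ m ≠ 0} m' → l1 m' ≤ D := by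
    obtain ⟨D0, hD0⟩ := (hminsfin.image l1).bddAbove
    refine ⟨max D0 0, le_max_right _ _, fun g hg m' hm' => ?_⟩
    exact le_trans (hD0 (Set.mem_image_of_mem l1 (Set.mem_biUnion hg hm'))) (le_max_left _ _)
  obtain ⟨DG, hDG0, hDG⟩ : ∃ DG : ℤ, 0 ≤ DG ∧ ∀ g ∈ 𝒢, l1 g ≤ DG := by
    obtain ⟨D0, hD0⟩ := (h𝒢fin.image l1).bddAbove
    refine ⟨max D0 0, le_max_right _ _, fun g hg => ?_⟩
    exact le_trans (hD0 (Set.mem_image_of_mem l1 hg)) (le_max_left _ _)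
  have htD : (0:ℤ) ≤ (t:ℤ) * D := mul_nonneg (by positivity) hD0
  refine ⟨2 + (t:ℤ) * D + DG, by omega, fun r hr => ?_⟩
  set C : ℤ := 2 + (t:ℤ) * D + DG with hCdef
  have hC2 : 2 ≤ C := by omega
  have hC : (t:ℤ) * D + DG ≤ C := by omega
  set M : Set (powIdx r n t φ → ℤ) :=
    {v | (powMat B φ r).mulVec v = 0 ∧ deg v ≤ C} with hMdef
  have hM : ∀ v : powIdx r n t φ → ℤ, (powMat B φ r).mulVec v = 0 → deg v ≤ C → v ∈ M :=
    fun v h1 h2 => ⟨h1, h2⟩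
  refine ⟨M, fun v hv => hv.1, ?_, fun v hv => hv.2⟩
  intro c w hw w' hw'
  -- set up the path of levels given by hG
  set b : Fin r → Fin h → ℤ := fun k j => c (k, j) with hbdef
  have hbu : ∀ k j, B.mulVec (umar φ w k) j = c (k, j) := (mem_fiber_iff B φ c w).1 hw.2
  have hbu' : ∀ k j, B.mulVec (umar φ w' k) j = c (k, j) := (mem_fiber_iff B φ c w').1 hw'.2
  have hbex : ∀ k, ∃ v : Fin n → ℤ, 0 ≤ v ∧ B.mulVec v = b k :=
    fun k => ⟨umar φ w k, umar_nonneg φ hw.1 k, funext fun j => hbu k j⟩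
  have hconn := hG r hr b hbex
  have hwS : lam φ hr w ∈ ⋂ k, marg φ '' {v : Fin n → ℤ | 0 ≤ v ∧ B.mulVec v = b k} :=
    Set.mem_iInter.2 fun k =>
      ⟨umar φ w k, ⟨umar_nonneg φ hw.1 k, funext fun j => hbu k j⟩, marg_umar φ hr w k⟩
  have hw'S : lam φ hr w' ∈ ⋂ k, marg φ '' {v : Fin n → ℤ | 0 ≤ v ∧ B.mulVec v = b k} :=
    Set.mem_iInter.2 fun k =>
      ⟨umar φ w' k, ⟨umar_nonneg φ hw'.1 k, funext fun j => hbu' k j⟩, marg_umar φ hr w' k⟩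
  have hpath := hconn _ hwS _ hw'S
  -- induction along the path of levels
  have main : ∀ (μ : Fin t → ℤ),
      Relation.ReflTransGen
        (mstep (⋂ k, marg φ '' {v : Fin n → ℤ | 0 ≤ v ∧ B.mulVec v = b k}) G) μ (lam φ hr w') →
      ∀ x : powIdx r n t φ → ℤ,
        x ∈ {y : powIdx r n t φ → ℤ | 0 ≤ y ∧ (powMat B φ r).mulVec y = c} →
        lam φ hr x = μ →
        Relation.ReflTransGen
          (mstep {y : powIdx r n t φ → ℤ | 0 ≤ y ∧ (powMat B φ r).mulVec y = c} M) x w' := by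
    intro μ hp
    induction hp using Relation.ReflTransGen.head_induction_on with
    | refl =>
      intro x hx hlx
      exact connect_sameLam B φ hr c C D DG hC2 hC hD0 hDG0 (hD 0 h𝒢zero) M hM _ x w' hx hw'
        (by rw [hlx]) le_rfl
    | head hstep htail ih =>
      rename_i μ₁ μ₂
      intro x hx hlx
      -- a table in the fiber whose level is μ₂
      have hμ₂S := hstep.2.1
      have hvex : ∀ k, ∃ v : Fin n → ℤ, (0 ≤ v ∧ B.mulVec v = b k) ∧ marg φ v = μ₂ := by
        intro k
        obtain ⟨v, hv1, hv2⟩ := Set.mem_iInter.1 hμ₂S k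
        exact ⟨v, hv1, hv2⟩
      choose vk hvk1 hvk2 using hvex
      obtain ⟨wm, hwm0, hwmm⟩ := coupling_exists φ hr (∑ a, μ₂ a).toNat vk μ₂
        (fun k => (hvk1 k).1) (fun k => hvk2 k) le_rfl
      have hwmF : wm ∈ {y : powIdx r n t φ → ℤ | 0 ≤ y ∧ (powMat B φ r).mulVec y = c} := by
        refine ⟨hwm0, (mem_fiber_iff B φ c wm).2 fun k j => ?_⟩
        rw [hwmm k, (hvk1 k).2]
      have hlamwm : lam φ hr wm = μ₂ := by
        rw [← marg_umar φ hr wm ⟨0, hr⟩, hwmm]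
        exact hvk2 ⟨0, hr⟩
      -- the level move belongs to 𝒢
      have hg𝒢 : μ₂ - μ₁ ∈ 𝒢 := by
        rcases hstep.2.2 with hg | hg
        · exact Set.mem_insert_iff.2 (Or.inr (Set.mem_union_left _ hg))
        · refine Set.mem_insert_iff.2 (Or.inr (Set.mem_union_right _ ?_))
          exact ⟨μ₁ - μ₂, hg, by abel⟩
      have hpath1 := connect_level B φ hr c C D DG (μ₂ - μ₁) hC2 hC hD0 hDG0
        (hD 0 h𝒢zero) (hD _ hg𝒢) (hDG _ hg𝒢) M hM x wm hx hwmF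
        (by rw [hlamwm, hlx]; abel)
      exact Relation.ReflTransGen.trans hpath1 (ih wm hwmF hlamwm)
  exact main _ hpath w hw rfl

end Stmt18
end
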